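/- arXiv:2203.13315 — 7 statements merged into one kernel-verified Lean document; each statement's English description precedes it below -/
import Mathlib

section
/- A Tychonoff space X is nearly pseudocompact if and only if X does not contain a C-embedded copy of the discrete space ℕ that is hard in X. -/
open Set Topology

noncomputable section

/-- The Hewitt realcompactification of `X`, as a subset of the Stone–Čech compactification
`βX`: the set of points `p ∈ βX` such that every continuous real-valued function on `X`
extends continuously, with real values, to the subspace `X ∪ {p}` of `βX`. -/
def hewittSet (X : Type*) [TopologicalSpace X] : Set (StoneCech X) :=
  {p | ∀ f : C(X, ℝ),
    ∃ g : C(((insert p (Set.range (stoneCechUnit : X → StoneCech X))) : Set (StoneCech X)), ℝ),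
      ∀ x : X, g ⟨stoneCechUnit x, Set.mem_insert_of_mem _ ⟨x, rfl⟩⟩ = f x}

/-- `K = cl_{βX}(υX \ X)`. -/
def KSet (X : Type*) [TopologicalSpace X] : Set (StoneCech X) :=
  closure (hewittSet X \ Set.range (stoneCechUnit : X → StoneCech X))

/-- `X` is nearly pseudocompact if `υX \ X` is dense in `βX \ X`. -/
def NearlyPseudocompact (X : Type*) [TopologicalSpace X] : Prop :=
  ∀ p : StoneCech X, p ∉ Set.range (stoneCechUnit : X → StoneCech X) →
    p ∈ closure (hewittSet X \ Set.range (stoneCechUnit : X → StoneCech X))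

/-- A subset `H` of `X` is hard in `X` if (its copy in `βX`) is closed in the subspace
`X ∪ K` of `βX`, i.e. `cl_{βX}(H) ∩ (X ∪ K) ⊆ H`. -/
def IsHard {X : Type*} [TopologicalSpace X] (H : Set X) : Prop :=
  closure (stoneCechUnit '' H) ∩ (Set.range (stoneCechUnit : X → StoneCech X) ∪ KSet X)
    ⊆ stoneCechUnit '' H

/-- A subset `S` of `X` is C-embedded in `X` if every continuous real-valued function on `S`
extends to a continuous real-valued function on `X`. -/
def CEmbedded {X : Type*} [TopologicalSpace X] (S : Set X) : Prop :=
  ∀ f : C(S, ℝ), ∃ g : C(X, ℝ), ∀ x : S, g x = f x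

section Aux

open Filter unitInterval

set_option linter.unusedSectionVars false

/-! ### The Stone–Čech unit is inducing for Tychonoff spaces -/

private lemma isInducing_scu {X : Type*} [TopologicalSpace X] [T35Space X] :
    Topology.IsInducing (stoneCechUnit : X → StoneCech X) := by
  rw [isInducing_iff_nhds]
  intro x
  refine le_antisymm (continuous_stoneCechUnit.tendsto x).le_comap ?_
  intro V hV
  obtain ⟨V', hV'sub, hV'open, hxV'⟩ := mem_nhds_iff.mp hV
  obtain ⟨f, fc, fx, fK⟩ := CompletelyRegularSpace.completely_regular x V'ᶜ
    hV'open.isClosed_compl (by simpa using hxV')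
  set F : StoneCech X → I := stoneCechExtend fc with hFdef
  have hF : Continuous F := continuous_stoneCechExtend fc
  have hext : ∀ y : X, F (stoneCechUnit y) = f y := fun y =>
    congrFun (stoneCechExtend_extends fc) y
  refine Filter.mem_comap.mpr ⟨(fun q => ((F q : ℝ))) ⁻¹' Iio 1, ?_, ?_⟩
  · refine IsOpen.mem_nhds (isOpen_Iio.preimage (continuous_subtype_val.comp hF)) ?_
    simp [mem_preimage, hext x, fx]
  · intro y hy
    simp only [mem_preimage, mem_Iio, hext y] at hy
    by_contra hyV
    have h1 : y ∈ V'ᶜ := fun h => hyV (hV'sub h)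
    have h2 := fK h1
    rw [h2] at hy
    norm_num at hy

/-! ### Piecewise-linear interpolation -/

private def clamp01 (s : ℝ) : ℝ := max 0 (min 1 s)

private lemma clamp01_continuous : Continuous clamp01 :=
  continuous_const.max (continuous_const.min continuous_id)

private lemma clamp01_of_nonpos {s : ℝ} (h : s ≤ 0) : clamp01 s = 0 := by
  unfold clamp01; rw [max_eq_left]; exact le_trans (min_le_right _ _) h

private lemma clamp01_of_one_le {s : ℝ} (h : 1 ≤ s) : clamp01 s = 1 := by
  unfold clamp01; rw [min_eq_left h, max_eq_right zero_le_one]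

/-- piecewise linear interpolation through points `(t n, h n)` where `t` is strictly
increasing with gaps > 1 and `t n > n`. -/
private lemma exists_continuous_interp (t : ℕ → ℝ) (hgap : ∀ n, t n + 1 < t (n + 1))
    (hgt : ∀ n : ℕ, (n : ℝ) < t n) (h : ℕ → ℝ) :
    ∃ w : C(ℝ, ℝ), ∀ n, w (t n) = h n := by
  have hmono : StrictMono t := strictMono_nat_of_lt_succ fun n => by linarith [hgap n]
  have hpos : ∀ k, (0:ℝ) < t (k+1) - t k := fun k => by linarith [hgap k]
  set term : ℕ → ℝ → ℝ := fun k s => (h (k+1) - h k) * clamp01 ((s - t k) / (t (k+1) - t k))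
    with hterm
  have termc : ∀ k, Continuous (term k) := fun k => by
    apply continuous_const.mul
    exact clamp01_continuous.comp ((continuous_id.sub continuous_const).div_const _)
  have term_zero : ∀ k s, s ≤ t k → term k s = 0 := by
    intro k s hs
    have : (s - t k) / (t (k+1) - t k) ≤ 0 :=
      div_nonpos_of_nonpos_of_nonneg (by linarith) (le_of_lt (hpos k))
    simp [hterm, clamp01_of_nonpos this]
  have term_one : ∀ k s, t (k+1) ≤ s → term k s = h (k+1) - h k := by
    intro k s hs
    have : (1:ℝ) ≤ (s - t k) / (t (k+1) - t k) := (le_div_iff₀ (hpos k)).mpr (by linarith)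
    simp [hterm, clamp01_of_one_le this]
  set W : ℕ → ℝ → ℝ := fun N s => h 0 + ∑ k ∈ Finset.range N, term k s with hW
  have Wc : ∀ N, Continuous (W N) :=
    fun N => continuous_const.add (continuous_finset_sum _ fun k _ => termc k)
  have hvan : ∀ (s : ℝ) k, (⌈s⌉₊ : ℕ) ≤ k → term k s = 0 := by
    intro s k hk
    apply term_zero
    calc s ≤ (⌈s⌉₊ : ℝ) := Nat.le_ceil s
    _ ≤ (k : ℝ) := by exact_mod_cast hk
    _ ≤ t k := le_of_lt (hgt k)
  have Weq : ∀ (s : ℝ) (N : ℕ), s ≤ (N : ℝ) → W N s = W ⌈s⌉₊ s := by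
    intro s N hsN
    have hle : ⌈s⌉₊ ≤ N := Nat.ceil_le.mpr hsN
    simp only [hW]
    rw [← Finset.sum_subset (Finset.range_subset_range.mpr hle)
      (fun k _ hk => hvan s k (le_of_not_gt (fun hc => hk (Finset.mem_range.mpr hc))))]
  set w : ℝ → ℝ := fun s => W ⌈s⌉₊ s with hwdef
  have hcont : Continuous w := by
    rw [continuous_iff_continuousAt]
    intro s₀
    have hN : s₀ < ((⌈s₀⌉₊ + 1 : ℕ) : ℝ) := by
      push_cast
      have := Nat.le_ceil s₀
      linarith
    have heq : ∀ᶠ s in nhds s₀, w s = W (⌈s₀⌉₊ + 1) s := by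
      filter_upwards [Iio_mem_nhds hN] with s hs
      rw [hwdef]
      exact (Weq s (⌈s₀⌉₊ + 1) (le_of_lt hs)).symm
    exact ((Wc (⌈s₀⌉₊ + 1)).continuousAt).congr (Filter.EventuallyEq.symm heq)
  refine ⟨⟨w, hcont⟩, ?_⟩
  intro n
  have hceil : n < ⌈t n⌉₊ := by
    have : (n : ℝ) < (⌈t n⌉₊ : ℝ) := lt_of_lt_of_le (hgt n) (Nat.le_ceil _)
    exact_mod_cast this
  show W ⌈t n⌉₊ (t n) = h n
  have hsplit : W ⌈t n⌉₊ (t n) = W n (t n) := by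
    simp only [hW]
    rw [← Finset.sum_subset (Finset.range_subset_range.mpr (le_of_lt hceil))]
    intro k _ hk
    have hnk : n ≤ k := le_of_not_gt (fun hc => hk (Finset.mem_range.mpr hc))
    exact term_zero k (t n) (hmono.monotone hnk)
  rw [hsplit]
  have : ∀ k ∈ Finset.range n, term k (t n) = h (k+1) - h k := by
    intro k hk
    exact term_one k (t n) (hmono.monotone (Finset.mem_range.mp hk))
  simp only [hW]
  rw [Finset.sum_congr rfl this, Finset.sum_range_sub]
  ring

/-! ### A real function unbounded near a point outside the Hewitt set -/

private def sq01 (v : ℝ) : ℝ := v / (1 + |v|)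

private lemma one_add_abs_pos (v : ℝ) : (0:ℝ) < 1 + |v| := by positivity

private lemma sq01_cont : Continuous sq01 :=
  continuous_id.div (continuous_const.add continuous_abs) (fun v => (one_add_abs_pos v).ne')

private lemma abs_sq01_lt_one (v : ℝ) : |sq01 v| < 1 := by
  rw [sq01, abs_div, abs_of_pos (one_add_abs_pos v)]
  rw [div_lt_one (one_add_abs_pos v)]
  linarith [abs_nonneg v]

private lemma sq01_mem (v : ℝ) : sq01 v ∈ Icc (-1 : ℝ) 1 := by
  have := abs_sq01_lt_one v
  rw [abs_lt] at this
  exact ⟨le_of_lt this.1, le_of_lt this.2⟩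

private lemma sq01_strictMono : StrictMono sq01 := by
  intro a b hab
  rw [sq01, sq01, div_lt_div_iff₀ (one_add_abs_pos a) (one_add_abs_pos b)]
  rcases abs_cases a with ⟨ha, _⟩ | ⟨ha, _⟩ <;> rcases abs_cases b with ⟨hb, _⟩ | ⟨hb, _⟩ <;>
    rw [ha, hb] <;> nlinarith

private lemma sq01_inv (v : ℝ) : sq01 v / (1 - |sq01 v|) = v := by
  have h1 : |sq01 v| = |v| / (1 + |v|) := by
    rw [sq01, abs_div, abs_of_pos (one_add_abs_pos v)]
  have h2 : 1 - |sq01 v| = 1 / (1 + |v|) := by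
    rw [h1]; field_simp; ring
  rw [h2, sq01]
  field_simp

/-- If `p` is not in the Hewitt set, there is a continuous real function unbounded on
every neighbourhood of `p`. -/
private lemma exists_unbounded_near {X : Type*} [TopologicalSpace X] [T35Space X]
    (p : StoneCech X) (hp : p ∉ hewittSet X) :
    ∃ f : C(X, ℝ), ∀ V ∈ nhds p, ∀ M : ℝ,
      ∃ x : X, stoneCechUnit x ∈ V ∧ M < f x := by
  simp only [hewittSet, mem_setOf_eq, not_forall] at hp
  obtain ⟨f, hf⟩ := hp
  have fc : Continuous (fun x => (⟨sq01 (f x), sq01_mem _⟩ : Icc (-1:ℝ) 1)) :=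
    Continuous.subtype_mk (sq01_cont.comp f.continuous) _
  set F : StoneCech X → Icc (-1:ℝ) 1 := stoneCechExtend fc with hF
  have Fc : Continuous F := continuous_stoneCechExtend fc
  have hFx : ∀ x : X, (F (stoneCechUnit x) : ℝ) = sq01 (f x) := fun x => by
    have h := congrFun (stoneCechExtend_extends fc) x
    simp only [Function.comp_apply] at h
    rw [hF, h]
  have habs : |(F p : ℝ)| = 1 := by
    by_contra hne
    have hlt : |(F p : ℝ)| < 1 :=
      lt_of_le_of_ne (abs_le.mpr ⟨(F p).2.1, (F p).2.2⟩) hne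
    set A : Set (StoneCech X) := insert p (Set.range (stoneCechUnit : X → StoneCech X))
      with hA
    have hfin : ∀ q : A, |(F q.1 : ℝ)| < 1 := by
      rintro ⟨q, hq⟩
      rcases hq with rfl | ⟨x, rfl⟩
      · exact hlt
      · rw [hFx x]; exact abs_sq01_lt_one _
    have hb : Continuous fun q : A => (F q.1 : ℝ) :=
      continuous_subtype_val.comp (Fc.comp continuous_subtype_val)
    have gc : Continuous (fun q : A => (F q.1 : ℝ) / (1 - |(F q.1 : ℝ)|)) := by
      refine hb.div (continuous_const.sub hb.abs) (fun q hc => ?_)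
      have := hfin q
      rw [sub_eq_zero] at hc
      rw [← hc] at this
      exact lt_irrefl _ this
    refine hf ⟨⟨_, gc⟩, fun x => ?_⟩
    show (F (stoneCechUnit x) : ℝ) / (1 - |(F (stoneCechUnit x) : ℝ)|) = f x
    rw [hFx x]; exact sq01_inv (f x)
  rcases (abs_eq (zero_le_one)).mp habs with hone | hone
  · refine ⟨f, fun V hV M => ?_⟩
    set O : Set (StoneCech X) := interior V ∩ {q | sq01 M < (F q : ℝ)} with hO
    have hOopen : IsOpen O := isOpen_interior.inter
      (isOpen_lt continuous_const (continuous_subtype_val.comp Fc))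
    have hpO : p ∈ O := by
      refine ⟨mem_interior_iff_mem_nhds.mpr hV, ?_⟩
      show sq01 M < (F p : ℝ)
      rw [hone]
      exact (abs_lt.mp (abs_sq01_lt_one M)).2
    obtain ⟨x, hx⟩ := denseRange_stoneCechUnit.exists_mem_open hOopen ⟨p, hpO⟩
    refine ⟨x, interior_subset hx.1, ?_⟩
    have hx2 := hx.2
    rw [mem_setOf_eq, hFx x] at hx2
    exact sq01_strictMono.lt_iff_lt.mp hx2
  · refine ⟨-f, fun V hV M => ?_⟩
    set O : Set (StoneCech X) := interior V ∩ {q | (F q : ℝ) < sq01 (-M)} with hO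
    have hOopen : IsOpen O := isOpen_interior.inter
      (isOpen_lt (continuous_subtype_val.comp Fc) continuous_const)
    have hpO : p ∈ O := by
      refine ⟨mem_interior_iff_mem_nhds.mpr hV, ?_⟩
      show (F p : ℝ) < sq01 (-M)
      rw [hone]
      exact (abs_lt.mp (abs_sq01_lt_one (-M))).1
    obtain ⟨x, hx⟩ := denseRange_stoneCechUnit.exists_mem_open hOopen ⟨p, hpO⟩
    refine ⟨x, interior_subset hx.1, ?_⟩
    have hx2 := hx.2
    rw [mem_setOf_eq, hFx x] at hx2
    have hlt : f x < -M := sq01_strictMono.lt_iff_lt.mp hx2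
    simp only [ContinuousMap.neg_apply]
    linarith

end Aux

/-- A Tychonoff space `X` is nearly pseudocompact if and only if `X` does not contain a
C-embedded copy of the discrete space `ℕ` (a countably infinite discrete subspace) that is
hard in `X`. -/
theorem nearlyPseudocompact_iff_no_hard_CEmbedded_copy_of_nat
    (X : Type*) [TopologicalSpace X] [T35Space X] :
    NearlyPseudocompact X ↔
      ¬ ∃ S : Set X, S.Countable ∧ S.Infinite ∧ DiscreteTopology S ∧
        CEmbedded S ∧ IsHard S := by
  have hu_inj : Function.Injective (stoneCechUnit : X → StoneCech X) :=
    injective_stoneCechUnit_of_t35Space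
  have hu_ind : Topology.IsInducing (stoneCechUnit : X → StoneCech X) := isInducing_scu
  constructor
  · rintro hNP ⟨S, -, hSinf, hSdisc, -, hShard⟩
    -- an accumulation point of the image of `S`
    have hTinf : (stoneCechUnit '' S).Infinite := hSinf.image hu_inj.injOn
    set e := hTinf.natEmbedding with he
    set seq : ℕ → StoneCech X := fun n => (e n : StoneCech X) with hseq
    have hseq_mem : ∀ n, seq n ∈ stoneCechUnit '' S := fun n => (e n).2
    have hseq_inj : Function.Injective seq := fun a b hab => e.injective (Subtype.ext hab)
    obtain ⟨p, hp⟩ := exists_clusterPt_of_compactSpace (Filter.map seq Filter.atTop)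
    have hcl : p ∈ closure (stoneCechUnit '' S) := by
      rw [mem_closure_iff_clusterPt]
      refine hp.mono (Filter.le_principal_iff.mpr ?_)
      exact Filter.mem_map.mpr (Filter.Eventually.of_forall hseq_mem)
    have hinf : ∀ W ∈ nhds p, {n | seq n ∈ W}.Infinite := by
      intro W hW
      have : ∃ᶠ n in Filter.atTop, seq n ∈ W :=
        (mapClusterPt_iff_frequently.mp hp) W hW
      exact Nat.frequently_atTop_iff_infinite.mp this
    have hpnotT : p ∉ stoneCechUnit '' S := by
      rintro ⟨s₀, hs₀S, rfl⟩
      have hopen : IsOpen ({(⟨s₀, hs₀S⟩ : S)} : Set S) := isOpen_discrete _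
      rw [isOpen_induced_iff] at hopen
      obtain ⟨V, hVopen, hVeq⟩ := hopen
      have hs₀V : s₀ ∈ V := by
        have : (⟨s₀, hs₀S⟩ : S) ∈ Subtype.val ⁻¹' V := by
          rw [hVeq]; exact mem_singleton _
        exact this
      have hVS : ∀ y, y ∈ V → y ∈ S → y = s₀ := by
        intro y hyV hyS
        have : (⟨y, hyS⟩ : S) ∈ Subtype.val ⁻¹' V := hyV
        rw [hVeq, mem_singleton_iff] at this
        exact congrArg Subtype.val this
      have hVnhds : V ∈ nhds s₀ := hVopen.mem_nhds hs₀V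
      rw [(Topology.isInducing_iff_nhds.mp hu_ind) s₀, Filter.mem_comap] at hVnhds
      obtain ⟨W, hWnhds, hWsub⟩ := hVnhds
      have hWinf := hinf W hWnhds
      have hsub : {n | seq n ∈ W} ⊆ {n | seq n = stoneCechUnit s₀} := by
        intro n hn
        obtain ⟨s, hsS, hseqn⟩ := hseq_mem n
        have hsV : s ∈ V := hWsub (by rw [mem_preimage, hseqn]; exact hn)
        have : s = s₀ := hVS s hsV hsS
        simp only [mem_setOf_eq, ← hseqn, this]
      have hss : {n | seq n = stoneCechUnit s₀}.Subsingleton := fun a ha b hb =>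
        hseq_inj (ha.trans hb.symm)
      exact (hWinf.mono hsub) hss.finite
    have hmem : p ∉ Set.range (stoneCechUnit : X → StoneCech X) ∪ KSet X :=
      fun h => hpnotT (hShard ⟨hcl, h⟩)
    have hK : p ∈ KSet X := hNP p (fun h => hmem (Or.inl h))
    exact hmem (Or.inr hK)
  · intro hno p hprange
    by_contra hpK
    apply hno
    have hpH : p ∉ hewittSet X := fun h => hpK (subset_closure ⟨h, hprange⟩)
    obtain ⟨f, hf⟩ := exists_unbounded_near p hpH
    have hKclosed : IsClosed (KSet X) := isClosed_closure
    have hpn : (KSet X)ᶜ ∈ nhds p := hKclosed.isOpen_compl.mem_nhds hpK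
    obtain ⟨B, hBnhds, hBclosed, hBsub⟩ := exists_mem_nhds_isClosed_subset hpn
    have hpick : ∀ c : ℝ, ∃ x : X, stoneCechUnit x ∈ B ∧ c < f x := fun c => hf B hBnhds c
    choose pick pickB pickf using hpick
    set xs : ℕ → X := fun n =>
      Nat.rec (pick 0) (fun k prev => pick (max ((k : ℝ) + 1) (f prev + 2))) n with hxs
    have hxs0 : xs 0 = pick 0 := rfl
    have hxsS : ∀ n, xs (n + 1) = pick (max ((n : ℝ) + 1) (f (xs n) + 2)) := fun n => rfl
    set t : ℕ → ℝ := fun n => f (xs n) with ht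
    have hB : ∀ n, stoneCechUnit (xs n) ∈ B := by
      intro n
      cases n with
      | zero => exact pickB 0
      | succ k => rw [hxsS k]; exact pickB _
    have hgt : ∀ n : ℕ, (n : ℝ) < t n := by
      intro n
      cases n with
      | zero => simpa [ht, hxs0] using pickf 0
      | succ k =>
        have := pickf (max ((k : ℝ) + 1) (f (xs k) + 2))
        have h1 : ((k : ℝ) + 1) ≤ max ((k : ℝ) + 1) (f (xs k) + 2) := le_max_left _ _
        show ((k + 1 : ℕ) : ℝ) < f (xs (k + 1))
        rw [hxsS k]
        push_cast
        linarith
    have hgap : ∀ n, t n + 2 < t (n + 1) := by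
      intro n
      have := pickf (max ((n : ℝ) + 1) (f (xs n) + 2))
      have h1 : f (xs n) + 2 ≤ max ((n : ℝ) + 1) (f (xs n) + 2) := le_max_right _ _
      show f (xs n) + 2 < f (xs (n + 1))
      rw [hxsS n]
      linarith
    have key : ∀ m k, m < k → t m + 2 < t k := by
      intro m k hmk
      induction k with
      | zero => omega
      | succ k ih =>
        rcases Nat.lt_succ_iff_lt_or_eq.mp hmk with h | h
        · exact lt_trans (ih h) (by linarith [hgap k])
        · subst h; exact hgap m
    have hxinj : Function.Injective xs := by
      intro a b hab
      by_contra hne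
      have htab : t a = t b := by rw [ht]; simp only [hab]
      rcases lt_trichotomy a b with h | h | h
      · have := key a b h; linarith
      · exact hne h
      · have := key b a h; linarith
    -- the set S
    refine ⟨Set.range xs, countable_range xs, infinite_range_of_injective hxinj, ?_, ?_, ?_⟩
    · -- discrete
      rw [discreteTopology_iff_isOpen_singleton]
      rintro ⟨s, hs⟩
      obtain ⟨n, rfl⟩ := hs
      rw [isOpen_induced_iff]
      refine ⟨f ⁻¹' (Ioo (t n - 1) (t n + 1)), isOpen_Ioo.preimage f.continuous, ?_⟩
      ext ⟨y, hy⟩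
      simp only [mem_preimage, mem_singleton_iff, Subtype.mk.injEq]
      constructor
      · intro hyIoo
        obtain ⟨m, rfl⟩ := hy
        by_contra hne
        have hmn : m ≠ n := fun hc => hne (by rw [hc])
        have h1 : t m ∈ Ioo (t n - 1) (t n + 1) := hyIoo
        rcases lt_or_gt_of_ne hmn with h | h
        · have := key m n h
          simp only [mem_Ioo] at h1
          linarith [h1.1]
        · have := key n m h
          simp only [mem_Ioo] at h1
          linarith [h1.2]
      · intro hy2
        replace hy2 : y = xs n := congrArg Subtype.val hy2
        rw [hy2]
        exact ⟨by linarith, by linarith⟩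
    · -- C-embedded
      intro hS
      obtain ⟨w, hw⟩ := exists_continuous_interp t (fun n => by linarith [hgap n]) hgt
        (fun n => hS ⟨xs n, ⟨n, rfl⟩⟩)
      refine ⟨w.comp f, ?_⟩
      rintro ⟨y, hy⟩
      obtain ⟨n, rfl⟩ := hy
      exact hw n
    · -- hard
      rintro q ⟨hqcl, hqmem⟩
      have hclB : closure (stoneCechUnit '' (Set.range xs)) ⊆ B := by
        apply closure_minimal _ hBclosed
        rintro _ ⟨y, ⟨n, rfl⟩, rfl⟩
        exact hB n
      have hqK : q ∉ KSet X := fun h => hBsub (hclB hqcl) h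
      rcases hqmem with ⟨y, rfl⟩ | h
      swap
      · exact absurd h hqK
      have hycl : y ∈ closure (Set.range xs) := by
        rw [hu_ind.closure_eq_preimage_closure_image]
        exact hqcl
      have hmem : y ∈ Set.range xs := by
        by_contra hyS
        set V := f ⁻¹' (Ioo (f y - 1) (f y + 1)) with hV
        have hVnhds : V ∈ nhds y := (isOpen_Ioo.preimage f.continuous).mem_nhds
          (by simp only [hV, mem_preimage, mem_Ioo]; constructor <;> linarith)
        obtain ⟨z, hzV, m, hzm⟩ := mem_closure_iff_nhds.mp hycl V hVnhds
        have hne : y ≠ xs m := fun hc => hyS (hc ▸ ⟨m, rfl⟩)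
        have hV'nhds : V \ {xs m} ∈ nhds y :=
          Filter.inter_mem hVnhds (isOpen_compl_singleton.mem_nhds hne)
        obtain ⟨z', hz'V, m', hz'm⟩ := mem_closure_iff_nhds.mp hycl _ hV'nhds
        subst hzm
        subst hz'm
        have hmm : m' ≠ m := fun hc => hz'V.2 (by rw [hc]; exact rfl)
        have h2 : t m' ∈ Ioo (f y - 1) (f y + 1) := hz'V.1
        have h3 : t m ∈ Ioo (f y - 1) (f y + 1) := hzV
        simp only [mem_Ioo] at h2 h3
        rcases lt_or_gt_of_ne hmm with hlt | hlt
        · have := key m' m hlt; linarith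
        · have := key m m' hlt; linarith
      exact ⟨y, hmem, rfl⟩
end
end

section
/- If a Tychonoff space X contains a C-embedded copy of the discrete space ℕ that is hard in X, then cl_{βX}(ℕ) \ ℕ ⊆ βX \ (X ∪ K), and consequently |βX \ (X ∪ K)| ≥ 2^𝔠 (so in particular X is not nearly pseudocompact). -/
open Set Topology Filter

noncomputable section

namespace NPCaux

abbrev D : Type := Finset ℚ × Finset (Finset ℚ)

def indepSet (r : ℝ) : Set D := {d | d.1.filter (fun q : ℚ => (q : ℝ) < r) ∈ d.2}

lemma indep_key (P Q : Finset ℝ) (hPQ : Disjoint P Q) :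
    {d : D | (∀ r ∈ P, d ∈ indepSet r) ∧ ∀ s ∈ Q, d ∉ indepSet s}.Infinite := by
  classical
  set R : Finset ℝ := P ∪ Q with hR
  set c : ℝ × ℝ → ℚ := fun p => if h : p.1 < p.2 then (exists_rat_btwn h).choose else 0 with hcdef
  set F₀ : Finset ℚ := (R ×ˢ R).image c with hF0
  have hbtwn : ∀ r ∈ R, ∀ s ∈ R, r < s → ∃ q ∈ F₀, r < (q : ℝ) ∧ (q : ℝ) < s := by
    intro r hr s hs hrs
    refine ⟨c (r, s), Finset.mem_image_of_mem _ (Finset.mem_product.mpr ⟨hr, hs⟩), ?_⟩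
    have : c (r, s) = (exists_rat_btwn hrs).choose := by simp [hcdef, hrs]
    rw [this]
    exact (exists_rat_btwn hrs).choose_spec
  obtain ⟨b, hb⟩ := R.exists_le
  obtain ⟨b', hb'⟩ := F₀.exists_le
  obtain ⟨B, hB⟩ := exists_rat_gt (max b (b' : ℝ))
  have hBR : ∀ r ∈ R, r < (B : ℝ) := fun r h =>
    lt_of_le_of_lt (le_trans (hb r h) (le_max_left _ _)) hB
  have hBF : ∀ q ∈ F₀, q < B := by
    intro q hq
    have h1 : (q : ℝ) ≤ (b' : ℝ) := by exact_mod_cast hb' q hq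
    have : (q : ℝ) < (B : ℝ) := lt_of_le_of_lt (le_trans h1 (le_max_right _ _)) hB
    exact_mod_cast this
  set G : Finset (Finset ℚ) := P.image (fun r => F₀.filter (fun q : ℚ => (q : ℝ) < r)) with hG
  set fseq : ℕ → D :=
    fun n => (F₀ ∪ (Finset.range n).image (fun i : ℕ => B + (i : ℚ)), G) with hfseq
  have hstab : ∀ n, ∀ r ∈ R,
      (fseq n).1.filter (fun q : ℚ => (q : ℝ) < r) = F₀.filter (fun q : ℚ => (q : ℝ) < r) := by
    intro n r hr
    have hnil : ((Finset.range n).image (fun i : ℕ => B + (i : ℚ))).filter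
        (fun q : ℚ => (q : ℝ) < r) = ∅ := by
      rw [Finset.filter_eq_empty_iff]
      intro q hq
      obtain ⟨i, _, rfl⟩ := Finset.mem_image.mp hq
      have h1 : r < (B : ℝ) := hBR r hr
      have h2 : (B : ℝ) ≤ ((B + (i : ℚ) : ℚ) : ℝ) := by push_cast; linarith [Nat.cast_nonneg (α := ℝ) i]
      push_neg
      exact le_trans h1.le h2
    simp only [hfseq, Finset.filter_union, hnil, Finset.union_empty]
  have minj : ∀ r ∈ R, ∀ s ∈ R, r ≠ s →
      F₀.filter (fun q : ℚ => (q : ℝ) < r) ≠ F₀.filter (fun q : ℚ => (q : ℝ) < s) := by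
    have key : ∀ r ∈ R, ∀ s ∈ R, r < s →
        F₀.filter (fun q : ℚ => (q : ℝ) < r) ≠ F₀.filter (fun q : ℚ => (q : ℝ) < s) := by
      intro r hr s hs hrs heq
      obtain ⟨q, hqF, hq1, hq2⟩ := hbtwn r hr s hs hrs
      have h1 : q ∈ F₀.filter (fun q : ℚ => (q : ℝ) < s) := Finset.mem_filter.mpr ⟨hqF, hq2⟩
      rw [← heq] at h1
      exact absurd (Finset.mem_filter.mp h1).2 (by linarith)
    intro r hr s hs hne
    rcases lt_or_gt_of_ne hne with h | h
    · exact key r hr s hs h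
    · exact fun e => key s hs r hr h e.symm
  have hmem : ∀ n, fseq n ∈
      {d : D | (∀ r ∈ P, d ∈ indepSet r) ∧ ∀ s ∈ Q, d ∉ indepSet s} := by
    intro n
    constructor
    · intro r hrP
      have hrR : r ∈ R := Finset.mem_union_left _ hrP
      show (fseq n).1.filter (fun q : ℚ => (q : ℝ) < r) ∈ (fseq n).2
      rw [hstab n r hrR]
      exact Finset.mem_image_of_mem _ hrP
    · intro s hsQ hmem
      have hsR : s ∈ R := Finset.mem_union_right _ hsQ
      have : (fseq n).1.filter (fun q : ℚ => (q : ℝ) < s) ∈ G := hmem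
      rw [hstab n s hsR] at this
      obtain ⟨r, hrP, heq⟩ := Finset.mem_image.mp this
      have hrs : r ≠ s := fun e => (Finset.disjoint_left.mp hPQ (e ▸ hrP)) hsQ
      exact minj r (Finset.mem_union_left _ hrP) s hsR hrs heq
  have hinj : Function.Injective fseq := by
    have hdisj : ∀ n : ℕ, Disjoint F₀ ((Finset.range n).image (fun i : ℕ => B + (i : ℚ))) := by
      intro n
      rw [Finset.disjoint_left]
      intro q hqF hqI
      obtain ⟨i, _, rfl⟩ := Finset.mem_image.mp hqI
      have h1 : B + (i : ℚ) < B := hBF _ hqF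
      have : (0 : ℚ) ≤ (i : ℚ) := Nat.cast_nonneg i
      linarith
    have hcard : ∀ n, (fseq n).1.card = F₀.card + n := by
      intro n
      have h1 : ((Finset.range n).image (fun i : ℕ => B + (i : ℚ))).card = n := by
        rw [Finset.card_image_of_injective _ (fun i j h => by
          exact_mod_cast add_left_cancel h), Finset.card_range]
      simp only [hfseq]
      rw [Finset.card_union_of_disjoint (hdisj n), h1]
    intro n m h
    have := congrArg (fun d : D => d.1.card) h
    simp only [hcard] at this
    omega
  exact Set.infinite_of_injective_forall_mem hinj hmem


def pat (f : ℝ → Bool) (r : ℝ) : Set D := if f r then indepSet r else (indepSet r)ᶜ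

lemma pat_neBot (f : ℝ → Bool) : (Filter.generate (Set.range (pat f))).NeBot := by
  classical
  rw [Filter.generate_neBot_iff]
  intro t hsub hfin
  set ch : Set D → ℝ := fun s => if h : ∃ r, pat f r = s then h.choose else 0 with hch
  have hchs : ∀ s ∈ t, pat f (ch s) = s := by
    intro s hs
    obtain ⟨r, hr⟩ := hsub hs
    have hex : ∃ r, pat f r = s := ⟨r, hr⟩
    simp only [hch, dif_pos hex]
    exact hex.choose_spec
  set R' : Finset ℝ := hfin.toFinset.image ch with hR'
  set P : Finset ℝ := R'.filter (fun r => f r = true) with hP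
  set Q : Finset ℝ := R'.filter (fun r => f r = false) with hQ
  have hdisj : Disjoint P Q := by
    rw [Finset.disjoint_left]
    intro r h1 h2
    have e1 := (Finset.mem_filter.mp h1).2
    have e2 := (Finset.mem_filter.mp h2).2
    simp [e1] at e2
  obtain ⟨d, hd1, hd2⟩ := (indep_key P Q hdisj).nonempty
  refine ⟨d, ?_⟩
  intro s hs
  have hmem : ch s ∈ R' := Finset.mem_image_of_mem _ (hfin.mem_toFinset.mpr hs)
  rcases hfr : f (ch s) with _ | _
  · have hQ' : ch s ∈ Q := Finset.mem_filter.mpr ⟨hmem, hfr⟩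
    have : d ∉ indepSet (ch s) := hd2 _ hQ'
    have heq : pat f (ch s) = (indepSet (ch s))ᶜ := by simp [pat, hfr]
    rw [← hchs s hs, heq]
    exact this
  · have hP' : ch s ∈ P := Finset.mem_filter.mpr ⟨hmem, hfr⟩
    have : d ∈ indepSet (ch s) := hd1 _ hP'
    have heq : pat f (ch s) = indepSet (ch s) := by simp [pat, hfr]
    rw [← hchs s hs, heq]
    exact this

def bigU (f : ℝ → Bool) : Ultrafilter D :=
  @Ultrafilter.of _ (Filter.generate (Set.range (pat f))) (pat_neBot f)

lemma pat_mem_bigU (f : ℝ → Bool) (r : ℝ) : pat f r ∈ bigU f := by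
  have h1 : pat f r ∈ Filter.generate (Set.range (pat f)) :=
    Filter.mem_generate_iff.mpr ⟨{pat f r}, by simp, Set.finite_singleton _, by simp⟩
  exact (@Ultrafilter.of_le _ _ (pat_neBot f)) h1

lemma indep_mem_bigU_of_true {f : ℝ → Bool} {r : ℝ} (h : f r = true) :
    indepSet r ∈ bigU f := by
  have := pat_mem_bigU f r
  rwa [pat, h, if_pos rfl] at this

lemma indep_compl_mem_bigU_of_false {f : ℝ → Bool} {r : ℝ} (h : f r = false) :
    (indepSet r)ᶜ ∈ bigU f := by
  have := pat_mem_bigU f r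
  rwa [pat, h] at this
  

end NPCaux

/-- If a Tychonoff space `X` contains a C-embedded copy `S` of the discrete space `ℕ` that is
hard in `X`, then `cl_{βX}(S) \ S ⊆ βX \ (X ∪ K)`, consequently `|βX \ (X ∪ K)| ≥ 2^𝔠`, and
in particular `X` is not nearly pseudocompact. -/
theorem not_nearlyPseudocompact_of_hard_CEmbedded_copy_of_nat
    (X : Type*) [TopologicalSpace X] [T35Space X] (S : Set X)
    (hcount : S.Countable) (hinf : S.Infinite) (hdisc : DiscreteTopology S)
    (hC : CEmbedded S) (hhard : IsHard S) :
    closure (stoneCechUnit '' S) \ (stoneCechUnit '' S) ⊆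
        (Set.range (stoneCechUnit : X → StoneCech X) ∪ KSet X)ᶜ ∧
      2 ^ Cardinal.continuum ≤
        Cardinal.mk ↥((Set.range (stoneCechUnit : X → StoneCech X) ∪ KSet X)ᶜ) ∧
      ¬ NearlyPseudocompact X := by
  classical
  haveI := hdisc
  haveI : Countable ↥S := hcount.to_subtype
  haveI : Infinite ↥S := hinf.to_subtype
  -- Part 1: from hardness
  have part1 : closure (stoneCechUnit '' S) \ (stoneCechUnit '' S) ⊆
      (Set.range (stoneCechUnit : X → StoneCech X) ∪ KSet X)ᶜ := by
    intro p hp hmem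
    exact hp.2 (hhard ⟨hp.1, hmem⟩)
  -- The machinery: limits of ultrafilters on S in βX
  obtain ⟨e⟩ : Nonempty (↥S ≃ NPCaux.D) := nonempty_equiv_of_countable
  set j : ↥S → StoneCech X := fun s => stoneCechUnit (s : X) with hj
  have hexists : ∀ U : Ultrafilter ↥S, ∃ p : StoneCech X, ↑(U.map j) ≤ 𝓝 p := by
    intro U
    obtain ⟨p, -, hp⟩ := isCompact_univ.ultrafilter_le_nhds (U.map j)
      (by rw [le_principal_iff]; exact univ_mem)
    exact ⟨p, hp⟩
  choose Psi hPsi using hexists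
  have key : ∀ (U V : Ultrafilter ↥S) (A : Set ↥S), A ∈ U → Aᶜ ∈ V → Psi U ≠ Psi V := by
    intro U V A hA hAc heq
    set f₀ : ↥S → ℝ := fun x => if x ∈ A then 1 else 0 with hf₀
    obtain ⟨g, hg⟩ := hC ⟨f₀, continuous_of_discreteTopology⟩
    set h : X → Set.Icc (0:ℝ) 1 := fun x => Set.projIcc 0 1 zero_le_one (g x) with hh
    have hcont : Continuous h := continuous_projIcc.comp g.continuous
    set G := stoneCechExtend hcont with hG
    have hGb : ∀ x : X, G (stoneCechUnit x) = h x :=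
      fun x => congrFun (stoneCechExtend_extends hcont) x
    have tendstoG : ∀ W : Ultrafilter ↥S, Filter.Tendsto (G ∘ j) W (𝓝 (G (Psi W))) := by
      intro W
      have h1 : Filter.Tendsto G (W.map j) (𝓝 (G (Psi W))) :=
        ((continuous_stoneCechExtend hcont).tendsto (Psi W)).mono_left (hPsi W)
      rwa [Ultrafilter.coe_map, Filter.tendsto_map'_iff] at h1
    have hval : ∀ (W : Ultrafilter ↥S) (B : Set ↥S) (c : ℝ) (hc : c ∈ Set.Icc (0:ℝ) 1),
        B ∈ W → (∀ x ∈ B, f₀ x = c) → G (Psi W) = ⟨c, hc⟩ := by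
      intro W B c hc hB hBc
      have hev : (G ∘ j) =ᶠ[(W : Filter ↥S)] fun _ => (⟨c, hc⟩ : Set.Icc (0:ℝ) 1) := by
        filter_upwards [hB] with x hx
        have hgx : g (x : X) = f₀ x := hg x
        show G (stoneCechUnit (x : X)) = _
        rw [hGb, hh]
        simp only [hgx, hBc x hx]
        exact Set.projIcc_of_mem zero_le_one hc
      have h2 : Filter.Tendsto (G ∘ j) W (𝓝 (⟨c, hc⟩ : Set.Icc (0:ℝ) 1)) :=
        (Filter.tendsto_congr' hev).mpr tendsto_const_nhds
      exact tendsto_nhds_unique (tendstoG W) h2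
    have h1 : G (Psi U) = ⟨1, by norm_num⟩ :=
      hval U A 1 (by norm_num) hA (fun x hx => by simp [hf₀, hx])
    have h0 : G (Psi V) = ⟨0, by norm_num⟩ :=
      hval V Aᶜ 0 (by norm_num) hAc (fun x hx => if_neg hx)
    rw [heq, h0] at h1
    have : (0 : ℝ) = 1 := congrArg Subtype.val h1
    norm_num at this
  have hclos : ∀ U : Ultrafilter ↥S, Psi U ∈ closure (stoneCechUnit '' S) := by
    intro U
    rw [mem_closure_iff_clusterPt]
    have hmem : stoneCechUnit '' S ∈ U.map j :=
      Ultrafilter.mem_map.mpr (Filter.mem_of_superset univ_mem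
        (fun x _ => (⟨(x : X), x.2, rfl⟩ : j x ∈ stoneCechUnit '' S)))
    have hle : ↑(U.map j) ≤ 𝓝 (Psi U) ⊓ 𝓟 (stoneCechUnit '' S) :=
      le_inf (hPsi U) (le_principal_iff.mpr hmem)
    exact Filter.NeBot.mono (Ultrafilter.neBot _) hle
  -- the injection from `ℝ → Bool`
  set Theta : (ℝ → Bool) → StoneCech X :=
    fun f => Psi ((NPCaux.bigU f).map e.symm) with hTheta
  have hpre : ∀ (f : ℝ → Bool) (r : ℝ),
      (⇑e.symm) ⁻¹' {x : ↥S | e x ∈ NPCaux.indepSet r} = NPCaux.indepSet r := by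
    intro f r
    ext d
    simp
  have sep : ∀ (f g : ℝ → Bool) (r : ℝ), f r = true → g r = false → Theta f ≠ Theta g := by
    intro f g r hf hg
    apply key _ _ {x : ↥S | e x ∈ NPCaux.indepSet r}
    · exact Ultrafilter.mem_map.mpr (by
        rw [hpre f r]; exact NPCaux.indep_mem_bigU_of_true hf)
    · refine Ultrafilter.mem_map.mpr ?_
      have : (⇑e.symm) ⁻¹' ({x : ↥S | e x ∈ NPCaux.indepSet r})ᶜ = (NPCaux.indepSet r)ᶜ := by
        rw [Set.preimage_compl, hpre f r]
      rw [this]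
      exact NPCaux.indep_compl_mem_bigU_of_false hg
  have hTheta_inj : Function.Injective Theta := by
    intro f g hfg
    by_contra hne
    obtain ⟨r, hr⟩ := Function.ne_iff.mp hne
    rcases hf : f r with _ | _ <;> rcases hg : g r with _ | _
    · exact hr (hf.trans hg.symm)
    · exact sep g f r hg hf hfg.symm
    · exact sep f g r hf hg hfg
    · exact hr (hf.trans hg.symm)
  -- cardinality of the remainder
  set T : Set (StoneCech X) := closure (stoneCechUnit '' S) \ (stoneCechUnit '' S) with hT
  have haleph : Cardinal.aleph0 < 2 ^ Cardinal.continuum :=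
    lt_of_le_of_lt Cardinal.aleph0_le_continuum (Cardinal.cantor _)
  have hT2 : 2 ^ Cardinal.continuum ≤ Cardinal.mk T := by
    have h1 : Cardinal.mk (ℝ → Bool) = 2 ^ Cardinal.continuum := by
      rw [← Cardinal.mk_real, ← Cardinal.mk_bool, Cardinal.power_def]
    have h2 : Cardinal.mk (Set.range Theta) = 2 ^ Cardinal.continuum := by
      have h := Cardinal.mk_range_eq_of_injective hTheta_inj
      rw [Cardinal.lift_uzero, h1, Cardinal.lift_two_power, Cardinal.lift_continuum] at h
      exact h
    have hsub : Set.range Theta ⊆ T ∪ (stoneCechUnit '' S) := by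
      rintro p ⟨f, rfl⟩
      by_cases hps : Theta f ∈ stoneCechUnit '' S
      · exact Or.inr hps
      · exact Or.inl ⟨hclos _, hps⟩
    have h3 : Cardinal.mk (Set.range Theta) ≤ Cardinal.mk ↥(T ∪ stoneCechUnit '' S) :=
      Cardinal.mk_le_mk_of_subset hsub
    have h4 : Cardinal.mk ↥(T ∪ stoneCechUnit '' S) ≤
        Cardinal.mk T + Cardinal.mk ↥(stoneCechUnit '' S) := Cardinal.mk_union_le _ _
    have h5 : Cardinal.mk ↥(stoneCechUnit '' S) ≤ Cardinal.aleph0 := by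
      haveI := (hcount.image (stoneCechUnit : X → StoneCech X)).to_subtype
      exact Cardinal.mk_le_aleph0
    have h6 : 2 ^ Cardinal.continuum ≤ Cardinal.mk T + Cardinal.aleph0 := by
      calc 2 ^ Cardinal.continuum = Cardinal.mk (Set.range Theta) := h2.symm
        _ ≤ Cardinal.mk T + Cardinal.mk ↥(stoneCechUnit '' S) := le_trans h3 h4
        _ ≤ Cardinal.mk T + Cardinal.aleph0 := add_le_add le_rfl h5
    rcases le_or_gt Cardinal.aleph0 (Cardinal.mk T) with hc | hc
    · rwa [Cardinal.add_eq_left hc hc] at h6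
    · exfalso
      have : Cardinal.mk T + Cardinal.aleph0 ≤ Cardinal.aleph0 := by
        calc Cardinal.mk T + Cardinal.aleph0 ≤ Cardinal.aleph0 + Cardinal.aleph0 :=
          add_le_add hc.le le_rfl
          _ = Cardinal.aleph0 := Cardinal.aleph0_add_aleph0
      exact absurd (le_trans h6 this) (not_le.mpr haleph)
  have part2 : 2 ^ Cardinal.continuum ≤
      Cardinal.mk ↥((Set.range (stoneCechUnit : X → StoneCech X) ∪ KSet X)ᶜ) :=
    le_trans hT2 (Cardinal.mk_le_mk_of_subset part1)
  refine ⟨part1, part2, ?_⟩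
  intro hNPC
  have hTne : T.Nonempty := by
    rw [Set.nonempty_coe_sort.symm, ← Cardinal.mk_ne_zero_iff]
    exact ne_of_gt (lt_of_le_of_lt zero_le (lt_of_lt_of_le haleph hT2))
  obtain ⟨p, hp⟩ := hTne
  have hpC : p ∉ Set.range (stoneCechUnit : X → StoneCech X) ∪ KSet X := part1 hp
  exact hpC (Or.inr (hNPC p (fun h => hpC (Or.inl h))))
end
end

section
/- Let X be a Tychonoff space and let f be a continuous real-valued function on X such that cl_X(X \ Z(f)) is hard in X but f is unbounded. Then X contains a C-embedded copy of the discrete space ℕ that is hard in X. -/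
open Set Topology

noncomputable section

/-- Aux: a sequence with gaps ≥ 1 under a continuous real valuation has closed, discrete range. -/
lemma gap_range_closed_discrete {Y : Type*} [TopologicalSpace Y] [T1Space Y]
    {u : Y → ℝ} (hu : Continuous u) {t : ℕ → ℝ}
    (hgap : ∀ m n : ℕ, m ≠ n → 1 ≤ |t m - t n|) {v : ℕ → Y}
    (hv : ∀ n, u (v n) = t n) :
    IsClosed (Set.range v) ∧ DiscreteTopology (Set.range v) := by
  have hsub : ∀ c : ℝ, (Set.range v ∩ u ⁻¹' Metric.ball c (1/2)).Subsingleton := by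
    intro c y hy z hz
    obtain ⟨hy1, hy2⟩ := hy
    obtain ⟨hz1, hz2⟩ := hz
    obtain ⟨m, rfl⟩ := hy1
    obtain ⟨n, rfl⟩ := hz1
    have hm : |t m - c| < 1/2 := by
      have := hy2; simp only [Set.mem_preimage, Metric.mem_ball, Real.dist_eq, hv] at this
      exact this
    have hn : |t n - c| < 1/2 := by
      have := hz2; simp only [Set.mem_preimage, Metric.mem_ball, Real.dist_eq, hv] at this
      exact this
    by_cases hmn : m = n
    · subst hmn; rfl
    · exfalso
      have h1 : |t m - t n| ≤ |t m - c| + |t n - c| := by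
        have := abs_sub (t m - c) (t n - c)
        calc |t m - t n| = |(t m - c) - (t n - c)| := by ring_nf
          _ ≤ |t m - c| + |t n - c| := abs_sub _ _
      linarith [hgap m n hmn]
  constructor
  · rw [← closure_subset_iff_isClosed]
    intro y hy
    have hU : u ⁻¹' Metric.ball (u y) (1/2) ∈ nhds y :=
      (Metric.isOpen_ball.preimage hu).mem_nhds (by simp)
    have h2 : y ∈ closure (Set.range v ∩ u ⁻¹' Metric.ball (u y) (1/2)) := by
      rw [mem_closure_iff_nhds] at hy ⊢
      intro V hV
      obtain ⟨z, hz⟩ := hy (V ∩ u ⁻¹' Metric.ball (u y) (1/2)) (Filter.inter_mem hV hU)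
      exact ⟨z, hz.1.1, hz.2, hz.1.2⟩
    have hcl := ((hsub (u y)).finite.isClosed).closure_subset h2
    exact hcl.1
  · rw [discreteTopology_iff_isOpen_singleton]
    rintro ⟨y, hy⟩
    obtain ⟨n, rfl⟩ := hy
    have key : ({⟨v n, ⟨n, rfl⟩⟩} : Set (Set.range v)) =
        (Subtype.val : Set.range v → Y) ⁻¹' (u ⁻¹' Metric.ball (t n) (1/2)) := by
      ext ⟨z, hz⟩
      obtain ⟨m, rfl⟩ := hz
      simp only [Set.mem_singleton_iff, Subtype.ext_iff, Set.mem_preimage, Metric.mem_ball,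
        Real.dist_eq, hv]
      constructor
      · intro h
        have : t m = t n := by rw [← hv m, ← hv n, h]
        simp [this]
      · intro h
        by_cases hmn : m = n
        · subst hmn; rfl
        · exfalso; linarith [hgap m n hmn]
    rw [key]
    exact (Metric.isOpen_ball.preimage hu).preimage continuous_subtype_val


/-- If `f` is a continuous real-valued function on a Tychonoff space `X` such that
`cl_X(X \ Z(f))` is hard in `X` but `f` is unbounded, then `X` contains a C-embedded copy of
the discrete space `ℕ` that is hard in `X`. -/
theorem exists_hard_CEmbedded_copy_of_nat_of_unbounded
    (X : Type*) [TopologicalSpace X] [T35Space X] (f : C(X, ℝ))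
    (hhard : IsHard (closure {x | f x ≠ 0}))
    (hunb : ¬ ∃ B : ℝ, ∀ x : X, |f x| ≤ B) :
    ∃ S : Set X, S.Countable ∧ S.Infinite ∧ DiscreteTopology S ∧
      CEmbedded S ∧ IsHard S := by
  push_neg at hunb
  choose g hg using hunb
  -- the sequence of points with rapidly growing |f| values
  let v : ℕ → X := fun n => Nat.rec (g 1) (fun _ p => g (|f p| + 1)) n
  let t : ℕ → ℝ := fun n => |f (v n)|
  have ht0 : 1 < t 0 := hg 1
  have hts : ∀ n, t n + 1 < t (n + 1) := fun n => hg (t n + 1)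
  have htmono : StrictMono t := strictMono_nat_of_lt_succ fun n => by linarith [hts n]
  have hgrow : ∀ m n : ℕ, m < n → t m + 1 < t n := by
    intro m n hmn
    calc t m + 1 < t (m + 1) := hts m
      _ ≤ t n := htmono.le_iff_le.mpr hmn
  have hgap : ∀ m n : ℕ, m ≠ n → 1 ≤ |t m - t n| := by
    intro m n hmn
    rcases lt_or_gt_of_ne hmn with h | h
    · have := hgrow m n h; rw [abs_sub_comm, abs_of_pos (by linarith)]; linarith
    · have := hgrow n m h; rw [abs_of_pos (by linarith)]; linarith
  have htinj : Function.Injective t := htmono.injective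
  have hvinj : Function.Injective v := by
    intro m n h
    exact htinj (by simp only [t, h])
  have hu : Continuous fun y : X => |f y| := f.continuous.abs
  obtain ⟨hSclosed, hSdisc⟩ :=
    gap_range_closed_discrete (u := fun y : X => |f y|) hu hgap (v := v) (fun n => rfl)
  obtain ⟨hTclosed, hTdisc⟩ :=
    gap_range_closed_discrete (u := (id : ℝ → ℝ)) continuous_id hgap (v := t) (fun n => rfl)
  refine ⟨Set.range v, Set.countable_range v, Set.infinite_range_of_injective hvinj, hSdisc,
    ?_, ?_⟩
  · -- C-embedded
    intro h
    -- index function on T = range t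
    have idx : ∀ s : Set.range t, ∃ n : ℕ, t n = (s : ℝ) := fun s => s.2
    choose nf hnf using idx
    let A : C(Set.range t, ℝ) :=
      ⟨fun s => h ⟨v (nf s), ⟨nf s, rfl⟩⟩, by
        haveI := hTdisc
        exact continuous_of_discreteTopology⟩
    obtain ⟨φ, hφ⟩ := A.exists_restrict_eq hTclosed
    refine ⟨φ.comp ⟨fun y => |f y|, hu⟩, ?_⟩
    rintro ⟨y, n, rfl⟩
    have h1 : φ (t n) = A ⟨t n, ⟨n, rfl⟩⟩ := by
      have := congrFun (congrArg DFunLike.coe hφ) (⟨t n, ⟨n, rfl⟩⟩ : Set.range t)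
      simpa using this
    have h2 : nf ⟨t n, ⟨n, rfl⟩⟩ = n := htinj (hnf ⟨t n, ⟨n, rfl⟩⟩)
    simp only [ContinuousMap.comp_apply, ContinuousMap.coe_mk]
    show φ (t n) = _
    rw [h1]
    show h ⟨v (nf ⟨t n, ⟨n, rfl⟩⟩), _⟩ = h ⟨v n, _⟩
    congr 1
    exact Subtype.ext (by rw [h2])
  · -- hard
    intro p hp
    obtain ⟨hp1, hp2⟩ := hp
    have hSsub : Set.range v ⊆ closure {x | f x ≠ 0} := by
      rintro y ⟨n, rfl⟩
      apply subset_closure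
      show f (v n) ≠ 0
      intro h0
      have : t n = 0 := by simp [t, h0]
      have := htmono.le_iff_le.mpr (Nat.zero_le n)
      linarith [ht0, this]
    have hmono : closure (stoneCechUnit '' Set.range v) ⊆
        closure (stoneCechUnit '' closure {x | f x ≠ 0}) :=
      closure_mono (Set.image_mono hSsub)
    obtain ⟨y, hyH, hyp⟩ := hhard ⟨hmono hp1, hp2⟩
    refine ⟨y, ?_, hyp⟩
    by_contra hyS
    -- separate y from the closed set range v
    obtain ⟨q, hqc, hqy, hqS⟩ :=
      CompletelyRegularSpace.completely_regular y (Set.range v) hSclosed hyS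
    let Q := stoneCechExtend hqc
    have hQ1 : ∀ z ∈ stoneCechUnit '' Set.range v, Q z = 1 := by
      rintro z ⟨w, hw, rfl⟩
      have := congrFun (stoneCechExtend_extends hqc) w
      rw [show Q (stoneCechUnit w) = q w from this]
      exact hqS hw
    have hQcl : closure (stoneCechUnit '' Set.range v) ⊆ {z | Q z = 1} := by
      apply closure_minimal hQ1
      exact isClosed_eq (continuous_stoneCechExtend hqc) continuous_const
    have hQp : Q p = 1 := hQcl hp1
    have hQp0 : Q p = 0 := by
      rw [← hyp]
      have := congrFun (stoneCechExtend_extends hqc) y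
      rw [show Q (stoneCechUnit y) = q y from this]
      exact hqy
    rw [hQp0] at hQp
    exact zero_ne_one hQp
end
end

section
/- A Tychonoff space X is nearly pseudocompact if and only if every family of nonempty subsets of X that are hard in X and has the finite intersection property has nonempty intersection. -/
open Set Topology

noncomputable section

section Aux

variable {X : Type*} [TopologicalSpace X] [T35Space X]

lemma stoneCechUnit_inj {a b : X} (h : stoneCechUnit a = stoneCechUnit b) : a = b := by
  by_contra hab
  obtain ⟨f, cf, hfa, hfb⟩ := CompletelyRegularSpace.completely_regular a {b}
    isClosed_singleton (by simpa using hab)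
  have := eq_if_stoneCechUnit_eq cf h
  rw [hfa, hfb rfl] at this
  exact zero_ne_one this

end Aux

/-- A Tychonoff space `X` is nearly pseudocompact if and only if every family of nonempty
subsets of `X` that are hard in `X` and has the finite intersection property has nonempty
intersection. -/
theorem nearlyPseudocompact_iff_hard_fip
    (X : Type*) [TopologicalSpace X] [T35Space X] :
    NearlyPseudocompact X ↔
      ∀ F : Set (Set X), (∀ H ∈ F, H.Nonempty ∧ IsHard H) →
        (∀ G ⊆ F, G.Finite → (⋂₀ G).Nonempty) → (⋂₀ F).Nonempty := by
  constructor
  · -- forward direction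
    intro hNP F hF hFIP
    rcases F.eq_empty_or_nonempty with rfl | ⟨H₀, hH₀⟩
    · exact hFIP ∅ (Set.empty_subset _) Set.finite_empty
    -- every hard set has closed image in βX
    have hcover : ∀ p : StoneCech X,
        p ∈ Set.range (stoneCechUnit : X → StoneCech X) ∪ KSet X := by
      intro p
      by_cases hp : p ∈ Set.range (stoneCechUnit : X → StoneCech X)
      · exact Or.inl hp
      · exact Or.inr (hNP p hp)
    have hclosed : ∀ H ∈ F, IsClosed (stoneCechUnit '' H) := by
      intro H hH
      have hhard := (hF H hH).2
      have : closure (stoneCechUnit '' H) ⊆ stoneCechUnit '' H := by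
        intro q hq
        exact hhard ⟨hq, hcover q⟩
      exact isClosed_of_closure_subset this
    -- use compactness of βX
    have hmain : (Set.univ ∩ ⋂ H : F, stoneCechUnit '' (H : Set X)).Nonempty := by
      apply CompactSpace.isCompact_univ.inter_iInter_nonempty
      · exact fun H => hclosed H H.2
      · intro u
        have hGsub : (fun H : F => (H : Set X)) '' ↑u ⊆ F := by
          rintro A ⟨H, _, rfl⟩; exact H.2
        obtain ⟨x, hx⟩ := hFIP _ hGsub ((u.finite_toSet).image _)
        refine ⟨stoneCechUnit x, Set.mem_univ _, ?_⟩
        simp only [Set.mem_iInter]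
        intro H hHu
        exact ⟨x, hx _ ⟨H, hHu, rfl⟩, rfl⟩
    obtain ⟨q, -, hq⟩ := hmain
    simp only [Set.mem_iInter] at hq
    obtain ⟨x₀, hx₀, hx₀q⟩ := hq ⟨H₀, hH₀⟩
    refine ⟨x₀, ?_⟩
    intro H hH
    obtain ⟨x, hx, hxq⟩ := hq ⟨H, hH⟩
    rwa [stoneCechUnit_inj (hxq.trans hx₀q.symm)] at hx
  · -- backward direction
    intro hFIP p hp
    by_contra hpK
    have hpH : p ∉ hewittSet X := fun hmem => hpK (subset_closure ⟨hmem, hp⟩)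
    simp only [hewittSet, Set.mem_setOf_eq, not_forall, not_exists] at hpH
    obtain ⟨f, hf⟩ := hpH
    -- auxiliary functions
    set f' : X → ℝ := fun x => 1 + |f x| with hf'def
    have hf'pos : ∀ x, 0 < f' x := fun x => by positivity
    have hf'one : ∀ x, 1 ≤ f' x := fun x => le_add_of_nonneg_right (abs_nonneg _)
    have hf'cont : Continuous f' := continuous_const.add f.continuous.abs
    -- u : X → Icc 0 1,  u x = 1 / f' x
    have humem : ∀ x, (f' x)⁻¹ ∈ Set.Icc (0:ℝ) 1 := by
      intro x
      constructor
      · positivity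
      · rw [inv_le_one_iff₀]; right; exact hf'one x
    set u : X → Set.Icc (0:ℝ) 1 := fun x => ⟨(f' x)⁻¹, humem x⟩ with hudef
    have hucont : Continuous u :=
      Continuous.subtype_mk (hf'cont.inv₀ fun x => (hf'pos x).ne') _
    -- v : X → Icc (-1) 1, v x = f x / f' x
    have hvmem : ∀ x, f x / f' x ∈ Set.Icc (-1:ℝ) 1 := by
      intro x
      rw [Set.mem_Icc, div_le_one (hf'pos x), le_div_iff₀ (hf'pos x), neg_one_mul, neg_le]
      constructor
      · exact (neg_le_abs _).trans (le_add_of_nonneg_left zero_le_one)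
      · exact (le_abs_self _).trans (le_add_of_nonneg_left zero_le_one)
    set v : X → Set.Icc (-1:ℝ) 1 := fun x => ⟨f x / f' x, hvmem x⟩ with hvdef
    have hvcont : Continuous v :=
      Continuous.subtype_mk (f.continuous.div hf'cont fun x => (hf'pos x).ne') _
    haveI : CompactSpace (Set.Icc (0:ℝ) 1) := isCompact_iff_compactSpace.mp isCompact_Icc
    haveI : CompactSpace (Set.Icc (-1:ℝ) 1) := isCompact_iff_compactSpace.mp isCompact_Icc
    set G : StoneCech X → Set.Icc (0:ℝ) 1 := stoneCechExtend hucont with hGdef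
    set Fe : StoneCech X → Set.Icc (-1:ℝ) 1 := stoneCechExtend hvcont with hFedef
    have hGu : ∀ x, G (stoneCechUnit x) = u x := fun x =>
      congrFun (stoneCechExtend_extends hucont) x
    have hFv : ∀ x, Fe (stoneCechUnit x) = v x := fun x =>
      congrFun (stoneCechExtend_extends hvcont) x
    -- Key claim: G p = 0
    have hGp : (G p : ℝ) = 0 := by
      by_contra hGp0
      have hGpos : ∀ s : (insert p (Set.range (stoneCechUnit : X → StoneCech X)) :
          Set (StoneCech X)), ((G s : ℝ) ≠ 0) := by
        rintro ⟨s, hs⟩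
        rcases hs with rfl | ⟨x, rfl⟩
        · exact hGp0
        · rw [hGu]
          exact inv_ne_zero (hf'pos x).ne'
      obtain ⟨x, hx⟩ := hf
        ⟨fun s => (Fe s : ℝ) / (G s : ℝ), by
          apply Continuous.div
          · exact continuous_subtype_val.comp
              ((continuous_stoneCechExtend hvcont).comp continuous_subtype_val)
          · exact continuous_subtype_val.comp
              ((continuous_stoneCechExtend hucont).comp continuous_subtype_val)
          · exact hGpos⟩
      apply hx
      show (Fe (stoneCechUnit x) : ℝ) / (G (stoneCechUnit x) : ℝ) = f x
      rw [hFv, hGu]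
      show (f x / f' x) / (f' x)⁻¹ = f x
      have := (hf'pos x).ne'
      field_simp
    -- Urysohn function separating p from KSet X
    have hKclosed : IsClosed (KSet X) := isClosed_closure
    have hdisj : Disjoint ({p} : Set (StoneCech X)) (KSet X) := by
      exact Set.disjoint_singleton_left.mpr hpK
    obtain ⟨h, hhp, hhK, hhmem⟩ :=
      exists_continuous_zero_one_of_isClosed isClosed_singleton hKclosed hdisj
    -- the combined function φ
    set φ : StoneCech X → ℝ := fun q => max (G q : ℝ) (h q) with hφdef
    have hφcont : Continuous φ :=
      (continuous_subtype_val.comp (continuous_stoneCechExtend hucont)).max h.continuous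
    have hφp : φ p = 0 := by
      have := hhp (Set.mem_singleton p)
      simp only [Pi.zero_apply] at this
      simp [hφdef, hGp, this]
    have hφK : ∀ q ∈ KSet X, 1 ≤ φ q := by
      intro q hq
      have := hhK hq
      simp only [Pi.one_apply] at this
      simp [hφdef, this]
    have hφX : ∀ x : X, 0 < φ (stoneCechUnit x) := by
      intro x
      have : (0:ℝ) < (G (stoneCechUnit x) : ℝ) := by
        rw [hGu]; exact inv_pos.mpr (hf'pos x)
      exact lt_max_of_lt_left this
    -- the hard sets
    set H : ℕ → Set X := fun n => {x | φ (stoneCechUnit x) ≤ 1 / (n + 2)} with hHdef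
    have hHmem : ∀ (n : ℕ) (x : X), x ∈ H n ↔ φ (stoneCechUnit x) ≤ 1 / (n + 2) := by
      intro n x
      rw [hHdef]
      rfl
    have hHanti : ∀ m n : ℕ, m ≤ n → H n ⊆ H m := by
      intro m n hmn x hx
      rw [hHmem] at hx ⊢
      refine le_trans hx ?_
      apply one_div_le_one_div_of_le
      · positivity
      · exact_mod_cast add_le_add_left (Nat.cast_le.mpr hmn) 2
    have hHne : ∀ n, (H n).Nonempty := by
      intro n
      have hopen : IsOpen {q : StoneCech X | φ q < 1 / (n + 2)} :=
        isOpen_lt hφcont continuous_const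
      have hpmem : p ∈ {q : StoneCech X | φ q < 1 / (n + 2)} := by
        simp only [Set.mem_setOf_eq, hφp]
        positivity
      obtain ⟨x, hx⟩ := denseRange_stoneCechUnit.exists_mem_open hopen ⟨p, hpmem⟩
      exact ⟨x, (hHmem n x).2 (le_of_lt hx)⟩
    have hHhard : ∀ n, IsHard (H n) := by
      intro n
      have hsub : stoneCechUnit '' H n ⊆ {q : StoneCech X | φ q ≤ 1 / (n + 2)} := by
        rintro _ ⟨x, hx, rfl⟩; exact (hHmem n x).1 hx
      have hCclosed : IsClosed {q : StoneCech X | φ q ≤ 1 / (n + 2)} :=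
        isClosed_le hφcont continuous_const
      have hclsub : closure (stoneCechUnit '' H n) ⊆ {q : StoneCech X | φ q ≤ 1 / (n + 2)} :=
        closure_minimal hsub hCclosed
      rintro q ⟨hq1, hq2⟩
      have hqle : φ q ≤ 1 / (n + 2) := hclsub hq1
      rcases hq2 with ⟨x, rfl⟩ | hqK
      · exact ⟨x, (hHmem n x).2 hqle, rfl⟩
      · exfalso
        have h1 : (1:ℝ) ≤ 1 / (n + 2) := le_trans (hφK q hqK) hqle
        have h2 : (1:ℝ) / (n + 2) < 1 := by
          rw [div_lt_one (by positivity)]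
          have : (0:ℝ) ≤ (n:ℝ) := Nat.cast_nonneg n
          linarith
        linarith
    -- apply the FIP hypothesis to the family of hard sets
    have hmain := hFIP (Set.range H) ?_ ?_
    · obtain ⟨x, hx⟩ := hmain
      have hxall : ∀ n, x ∈ H n := fun n => hx (H n) ⟨n, rfl⟩
      have hpos : 0 < φ (stoneCechUnit x) := hφX x
      obtain ⟨n, hn⟩ := exists_nat_one_div_lt hpos
      have h1 := (hHmem n x).1 (hxall n)
      have h2 : (1:ℝ) / (n + 2) ≤ 1 / (n + 1) := by
        apply one_div_le_one_div_of_le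
        · positivity
        · linarith
      have : φ (stoneCechUnit x) ≤ 1 / (n + 1) := le_trans h1 h2
      linarith
    · rintro _ ⟨n, rfl⟩
      exact ⟨hHne n, hHhard n⟩
    · intro G hGsub hGfin
      have key : ∀ G' : Set (Set X), G'.Finite → G' ⊆ Set.range H →
          ∃ n, H n ⊆ ⋂₀ G' := by
        intro G' hG'fin
        refine Set.Finite.induction_on G' hG'fin ?_ ?_
        · intro _
          exact ⟨0, by simp⟩
        · intro A s hAs hsfin ih hins
          rw [Set.insert_subset_iff] at hins
          obtain ⟨m, rfl⟩ := hins.1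
          obtain ⟨n, hn⟩ := ih hins.2
          refine ⟨max m n, ?_⟩
          rw [Set.sInter_insert]
          exact Set.subset_inter (hHanti m (max m n) (le_max_left m n))
            ((hHanti n (max m n) (le_max_right m n)).trans hn)
      obtain ⟨n, hn⟩ := key G hGfin hGsub
      exact (hHne n).mono hn
end
end

section
/- For a Tychonoff space X, the following are equivalent: (1) X is nearly pseudocompact; (2) every subset of X that is hard in X is compact; (3) every regular closed subset of X that is hard in X is compact. -/
open Set Topology

noncomputable section

open Filter in
lemma isInducing_stoneCechUnit' (X : Type*) [TopologicalSpace X] [T35Space X] :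
    IsInducing (stoneCechUnit : X → StoneCech X) := by
  rw [isInducing_iff_nhds]
  intro x
  refine le_antisymm (continuous_stoneCechUnit.tendsto x).le_comap ?_
  intro U hU
  obtain ⟨W, hWU, hWopen, hxW⟩ := mem_nhds_iff.mp hU
  obtain ⟨f, fc, fx0, fK1⟩ := CompletelyRegularSpace.completely_regular x Wᶜ
    hWopen.isClosed_compl (by simpa using hxW)
  have hg := continuous_stoneCechExtend fc
  refine mem_comap.mpr ⟨stoneCechExtend fc ⁻¹' {y : unitInterval | (y : ℝ) < 1}, ?_, ?_⟩
  · refine IsOpen.mem_nhds ?_ ?_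
    · exact (continuous_subtype_val.isOpen_preimage _ isOpen_Iio).preimage hg
    · have he : stoneCechExtend fc (stoneCechUnit x) = f x :=
        congrFun (stoneCechExtend_extends fc) x
      show ((stoneCechExtend fc (stoneCechUnit x) : unitInterval) : ℝ) < 1
      rw [he, fx0]
      norm_num
  · intro x' hx'
    have he : stoneCechExtend fc (stoneCechUnit x') = f x' :=
      congrFun (stoneCechExtend_extends fc) x'
    replace hx' : ((f x' : unitInterval) : ℝ) < 1 := by
      rw [← he]; exact hx'
    by_contra hx'U
    have h1 : f x' = 1 := fK1 (fun h => hx'U (hWU h))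
    rw [h1] at hx'
    simp at hx' 

lemma aux_closed_image_of_hard {X : Type*} [TopologicalSpace X] [T35Space X]
    (hnp : NearlyPseudocompact X) {H : Set X} (hH : IsHard H) :
    IsClosed (stoneCechUnit '' H) := by
  rw [← closure_subset_iff_isClosed]
  intro q hq
  refine hH ⟨hq, ?_⟩
  by_cases h : q ∈ Set.range (stoneCechUnit : X → StoneCech X)
  · exact Or.inl h
  · exact Or.inr (hnp q h)

/-- For a Tychonoff space `X`, the following are equivalent: (1) `X` is nearly pseudocompact;
(2) every subset of `X` that is hard in `X` is compact; (3) every regular closed subset of `X`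
that is hard in `X` is compact. -/
theorem nearlyPseudocompact_tfae_hard_compact
    (X : Type*) [TopologicalSpace X] [T35Space X] :
    List.TFAE [NearlyPseudocompact X,
      ∀ H : Set X, IsHard H → IsCompact H,
      ∀ H : Set X, H = closure (interior H) → IsHard H → IsCompact H] := by
  have hind := isInducing_stoneCechUnit' X
  have hinj := injective_stoneCechUnit_of_t35Space (X := X)
  tfae_have 1 → 2 := by
    intro h1 H hH
    have hc : IsCompact (stoneCechUnit '' H) :=
      (aux_closed_image_of_hard h1 hH).isCompact
    exact hind.isCompact_iff.mpr hc
  tfae_have 2 → 3 := fun h2 H _ hH => h2 H hH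
  tfae_have 3 → 1 := by
    intro h3
    by_contra hnp
    unfold NearlyPseudocompact at hnp
    push_neg at hnp
    obtain ⟨p, hpX, hpK⟩ := hnp
    have hK : IsClosed (KSet X) := isClosed_closure
    obtain ⟨f, hf0, hf1, -⟩ := exists_continuous_zero_one_of_isClosed hK isClosed_singleton
      (Set.disjoint_singleton_right.mpr hpK)
    set V : Set X := stoneCechUnit ⁻¹' (f ⁻¹' Set.Ioi (1/2)) with hV
    have hVopen : IsOpen V :=
      (f.continuous.isOpen_preimage _ isOpen_Ioi).preimage continuous_stoneCechUnit
    set H : Set X := closure V with hHdef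
    have hreg : H = closure (interior H) := by
      refine subset_antisymm (closure_mono (interior_maximal subset_closure hVopen)) ?_
      calc closure (interior H) ⊆ closure H := closure_mono interior_subset
        _ = H := by rw [hHdef, closure_closure]
    have hfH : closure (stoneCechUnit '' H) ⊆ f ⁻¹' Set.Ici (1/2) := by
      refine closure_minimal ?_ (isClosed_Ici.preimage f.continuous)
      calc stoneCechUnit '' H ⊆ closure (stoneCechUnit '' V) :=
            image_closure_subset_closure_image continuous_stoneCechUnit
        _ ⊆ closure (f ⁻¹' Set.Ici (1/2)) := by
            refine closure_mono ?_
            rintro q ⟨x, hx, rfl⟩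
            exact le_of_lt (show (1:ℝ)/2 < f (stoneCechUnit x) from hx)
        _ = f ⁻¹' Set.Ici (1/2) :=
            (isClosed_Ici.preimage f.continuous).closure_eq
    have hhard : IsHard H := by
      rintro q ⟨hq1, hq2⟩
      have hqK : q ∉ KSet X := by
        intro hqK
        have := hfH hq1
        rw [Set.mem_preimage, hf0 hqK] at this
        norm_num at this
      rcases hq2 with hq2 | hq2
      · obtain ⟨x, rfl⟩ := hq2
        have hx : x ∈ closure H := by
          rw [hind.closure_eq_preimage_closure_image]
          exact hq1
        rw [hHdef, closure_closure] at hx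
        exact ⟨x, hx, rfl⟩
      · exact absurd hq2 hqK
    have hcomp : IsCompact H := h3 H hreg hhard
    have hclosed : IsClosed (stoneCechUnit '' H) :=
      (hcomp.image continuous_stoneCechUnit).isClosed
    have hpcl : p ∈ closure (stoneCechUnit '' V) := by
      rw [mem_closure_iff]
      intro O hO hpO
      have hOn : (O ∩ f ⁻¹' Set.Ioi (1/2)).Nonempty := by
        refine ⟨p, hpO, ?_⟩
        simp only [Set.mem_preimage, Set.mem_Ioi]
        rw [hf1 rfl]
        norm_num
      obtain ⟨x, hx⟩ := denseRange_stoneCechUnit.exists_mem_open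
        (hO.inter (f.continuous.isOpen_preimage _ isOpen_Ioi)) hOn
      exact ⟨stoneCechUnit x, hx.1, x, hx.2, rfl⟩
    have hpH : p ∈ stoneCechUnit '' H := by
      rw [← hclosed.closure_eq]
      exact closure_mono (Set.image_mono subset_closure) hpcl
    obtain ⟨x, -, rfl⟩ := hpH
    exact hpX ⟨x, rfl⟩
  tfae_finish
end
end

section
/- A Tychonoff space X is nearly pseudocompact if and only if C_H(X) ⊆ C*(X), i.e., every continuous real-valued function f on X for which cl_X(X \ Z(f)) is hard in X is bounded. -/
open Set Topology

noncomputable section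

lemma mem_of_unit_mem_closure' {X : Type*} [TopologicalSpace X] [T35Space X]
    {H : Set X} (hH : IsClosed H) {x : X}
    (hx : stoneCechUnit x ∈ closure (stoneCechUnit '' H)) : x ∈ H := by
  by_contra hxH
  obtain ⟨f, fc, fx0, fH1⟩ := CompletelyRegularSpace.completely_regular x H hH hxH
  have hFu : ∀ y, stoneCechExtend fc (stoneCechUnit y) = f y :=
    congrFun (stoneCechExtend_extends fc)
  have h1 : closure (stoneCechUnit '' H) ⊆ {q | stoneCechExtend fc q = 1} := by
    apply closure_minimal
    · rintro _ ⟨y, hy, rfl⟩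
      exact (hFu y).trans (fH1 hy)
    · exact isClosed_eq (continuous_stoneCechExtend fc) continuous_const
  have h2 := h1 hx
  rw [mem_setOf_eq, hFu x, fx0] at h2
  exact zero_ne_one h2

lemma backward_dir {X : Type*} [TopologicalSpace X] [T35Space X]
    (hCH : ∀ f : C(X, ℝ),
      (closure (stoneCechUnit '' closure {x | f x ≠ 0}) ∩
        (Set.range (stoneCechUnit : X → StoneCech X) ∪
          closure ({p | ∀ f : C(X, ℝ),
          ∃ g : C(((insert p (Set.range (stoneCechUnit : X → StoneCech X))) : Set (StoneCech X)), ℝ),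
            ∀ x : X, g ⟨stoneCechUnit x, Set.mem_insert_of_mem _ ⟨x, rfl⟩⟩ = f x}
          \ Set.range (stoneCechUnit : X → StoneCech X)))
        ⊆ stoneCechUnit '' closure {x | f x ≠ 0}) → ∃ B : ℝ, ∀ x : X, |f x| ≤ B) :
    ∀ p : StoneCech X, p ∉ Set.range (stoneCechUnit : X → StoneCech X) →
      p ∈ closure ({p | ∀ f : C(X, ℝ),
        ∃ g : C(((insert p (Set.range (stoneCechUnit : X → StoneCech X))) : Set (StoneCech X)), ℝ),
          ∀ x : X, g ⟨stoneCechUnit x, Set.mem_insert_of_mem _ ⟨x, rfl⟩⟩ = f x}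
        \ Set.range (stoneCechUnit : X → StoneCech X)) := by
  intro p hpnr
  by_contra hpK
  -- p is not in the Hewitt set
  have hpU : ¬ (∀ f0 : C(X, ℝ),
      ∃ g : C(((insert p (Set.range (stoneCechUnit : X → StoneCech X))) : Set (StoneCech X)), ℝ),
        ∀ x : X, g ⟨stoneCechUnit x, Set.mem_insert_of_mem _ ⟨x, rfl⟩⟩ = f0 x) :=
    fun h => hpK (subset_closure ⟨h, hpnr⟩)
  push_neg at hpU
  obtain ⟨f0, hf0⟩ := hpU
  -- h0 = f0/(1+|f0|) into Icc (-1) 1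
  have hpos : ∀ x : X, (0:ℝ) < 1 + |f0 x| := fun x => by positivity
  have habs_lt : ∀ x : X, |f0 x / (1 + |f0 x|)| < 1 := by
    intro x
    rw [abs_div, abs_of_pos (hpos x), div_lt_one (hpos x)]
    linarith
  have hmem : ∀ x : X, f0 x / (1 + |f0 x|) ∈ Icc (-1:ℝ) 1 := by
    intro x
    have := abs_le.mp (habs_lt x).le
    exact ⟨this.1, this.2⟩
  set h0 : X → Icc (-1:ℝ) 1 := fun x => ⟨f0 x / (1 + |f0 x|), hmem x⟩ with h0_def
  have ch0 : Continuous h0 := by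
    apply Continuous.subtype_mk
    exact f0.continuous.div (by continuity) (fun x => (hpos x).ne')
  set H0 := stoneCechExtend ch0 with H0_def
  have hH0u : ∀ x, H0 (stoneCechUnit x) = h0 x := congrFun (stoneCechExtend_extends ch0)
  have hH0cont : Continuous fun q => ((H0 q : ℝ)) :=
    continuous_subtype_val.comp (continuous_stoneCechExtend ch0)
  -- |H0 p| = 1
  have habs1 : |(H0 p : ℝ)| = 1 := by
    rcases lt_or_eq_of_le (abs_le.mpr ⟨(H0 p).2.1, (H0 p).2.2⟩) with hlt | heq
    · exfalso
      set S := ((insert p (Set.range (stoneCechUnit : X → StoneCech X))) : Set (StoneCech X))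
      have hden : ∀ q : S, 1 - |(H0 q.1 : ℝ)| ≠ 0 := by
        rintro ⟨q, hq⟩
        rcases hq with rfl | ⟨x, rfl⟩
        · simp only
          intro h
          rw [sub_eq_zero] at h
          exact absurd h.symm hlt.ne
        · simp only
          rw [hH0u x]
          intro h
          rw [sub_eq_zero] at h
          exact absurd h.symm (habs_lt x).ne
      have hnc : Continuous fun q : S => (H0 q.1 : ℝ) := hH0cont.comp continuous_subtype_val
      have hdc : Continuous fun q : S => 1 - |(H0 q.1 : ℝ)| := by continuity
      set g : C(S, ℝ) := ⟨fun q => (H0 q.1 : ℝ) / (1 - |(H0 q.1 : ℝ)|), hnc.div hdc hden⟩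
      obtain ⟨x, hx⟩ := hf0 g
      apply hx
      show (H0 (stoneCechUnit x) : ℝ) / (1 - |(H0 (stoneCechUnit x) : ℝ)|) = f0 x
      rw [hH0u x]
      show (f0 x / (1 + |f0 x|)) / (1 - |f0 x / (1 + |f0 x|)|) = f0 x
      rw [abs_div, abs_of_pos (hpos x)]
      have h1 : 1 - |f0 x| / (1 + |f0 x|) = 1 / (1 + |f0 x|) := by
        field_simp
        ring
      rw [h1]
      field_simp
    · exact heq
  -- the function Gr = 1 - |H0|
  set Gr : StoneCech X → ℝ := fun q => 1 - |(H0 q : ℝ)| with Gr_def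
  have Grc : Continuous Gr := continuous_const.sub hH0cont.abs
  have hGrp : Gr p = 0 := by rw [Gr_def]; simp [habs1]
  have hGru : ∀ x, Gr (stoneCechUnit x) = 1 / (1 + |f0 x|) := by
    intro x
    show 1 - |(H0 (stoneCechUnit x) : ℝ)| = 1 / (1 + |f0 x|)
    rw [hH0u x]
    show 1 - |f0 x / (1 + |f0 x|)| = 1 / (1 + |f0 x|)
    rw [abs_div, abs_of_pos (hpos x)]
    field_simp
    ring
  -- Urysohn separation of K from p
  obtain ⟨φ, hφ0, hφ1, hφ01⟩ := exists_continuous_zero_one_of_isClosed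
    (isClosed_closure (s := ({p | ∀ f : C(X, ℝ),
        ∃ g : C(((insert p (Set.range (stoneCechUnit : X → StoneCech X))) : Set (StoneCech X)), ℝ),
          ∀ x : X, g ⟨stoneCechUnit x, Set.mem_insert_of_mem _ ⟨x, rfl⟩⟩ = f x}
        \ Set.range (stoneCechUnit : X → StoneCech X))))
    (isClosed_singleton (x := p)) (disjoint_singleton_right.mpr hpK)
  set ψ : StoneCech X → ℝ := fun q => 2 * max (φ q - 1/2) 0 with ψ_def
  have ψc : Continuous ψ :=
    continuous_const.mul ((φ.continuous.sub continuous_const).max continuous_const)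
  have hψp : ψ p = 1 := by
    have : φ p = 1 := hφ1 rfl
    rw [ψ_def]; simp [this]; norm_num
  have hψne : ∀ q, ψ q ≠ 0 → 1/2 ≤ φ q := by
    intro q hq
    by_contra hlt
    push_neg at hlt
    apply hq
    rw [ψ_def]
    simp only [mul_eq_zero]
    right
    rw [max_eq_right (by linarith)]
  have hψnn : ∀ q, 0 ≤ ψ q := fun q => by positivity
  -- the unbounded function with hard support
  set f : C(X, ℝ) := ⟨fun x => ψ (stoneCechUnit x) * (1 + |f0 x|),
    (ψc.comp continuous_stoneCechUnit).mul (continuous_const.add f0.continuous.abs)⟩ with f_def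
  have hfval : ∀ x, f x = ψ (stoneCechUnit x) * (1 + |f0 x|) := fun x => rfl
  have hsub : closure (stoneCechUnit '' closure {x | f x ≠ 0}) ⊆ {q | 1/2 ≤ φ q} := by
    apply closure_minimal
    · rintro _ ⟨x, hxH, rfl⟩
      have hXsub : closure {x | f x ≠ 0} ⊆ {y | 1/2 ≤ φ (stoneCechUnit y)} := by
        apply closure_minimal
        · intro y hy
          simp only [mem_setOf_eq] at hy ⊢
          apply hψne
          intro hψ0
          apply hy
          rw [hfval y, hψ0, zero_mul]
        · exact isClosed_le continuous_const (φ.continuous.comp continuous_stoneCechUnit)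
      exact hXsub hxH
    · exact isClosed_le continuous_const φ.continuous
  have hhard : closure (stoneCechUnit '' closure {x | f x ≠ 0}) ∩
      (Set.range (stoneCechUnit : X → StoneCech X) ∪
        closure ({p | ∀ f : C(X, ℝ),
        ∃ g : C(((insert p (Set.range (stoneCechUnit : X → StoneCech X))) : Set (StoneCech X)), ℝ),
          ∀ x : X, g ⟨stoneCechUnit x, Set.mem_insert_of_mem _ ⟨x, rfl⟩⟩ = f x}
        \ Set.range (stoneCechUnit : X → StoneCech X)))
      ⊆ stoneCechUnit '' closure {x | f x ≠ 0} := by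
    rintro q ⟨hq1, hq2⟩
    rcases hq2 with ⟨x, rfl⟩ | hqK
    · exact ⟨x, mem_of_unit_mem_closure' isClosed_closure hq1, rfl⟩
    · exfalso
      have h1 : φ q = 0 := hφ0 hqK
      have h2 := hsub hq1
      rw [mem_setOf_eq, h1] at h2
      linarith
  obtain ⟨B, hB⟩ := hCH f hhard
  -- derive contradiction: f is unbounded
  have hBpos : (0:ℝ) < 1/(2*(|B|+1)) := by positivity
  have hW : IsOpen ({q | 1/2 < ψ q} ∩ {q | Gr q < 1/(2*(|B|+1))}) :=
    (isOpen_lt continuous_const ψc).inter (isOpen_lt Grc continuous_const)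
  have hpW : p ∈ {q | 1/2 < ψ q} ∩ {q | Gr q < 1/(2*(|B|+1))} := by
    constructor
    · simp only [mem_setOf_eq, hψp]; norm_num
    · simp only [mem_setOf_eq, hGrp]; exact hBpos
  obtain ⟨x, hx⟩ := denseRange_stoneCechUnit.exists_mem_open hW ⟨p, hpW⟩
  have hx1 : 1/2 < ψ (stoneCechUnit x) := hx.1
  have hx2 : Gr (stoneCechUnit x) < 1/(2*(|B|+1)) := hx.2
  rw [hGru x] at hx2
  have h2 : 2*(|B|+1) < 1 + |f0 x| := by
    have := (div_lt_div_iff₀ (hpos x) (by positivity : (0:ℝ) < 2*(|B|+1))).mp hx2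
    linarith
  have hBx := hB x
  rw [hfval x] at hBx
  have hle : ψ (stoneCechUnit x) * (1 + |f0 x|) ≤ B :=
    le_trans (le_abs_self _) hBx
  nlinarith [le_abs_self B, abs_nonneg B, hpos x]


lemma forward_dir {X : Type*} [TopologicalSpace X] [T35Space X]
    (hNP : ∀ p : StoneCech X, p ∉ Set.range (stoneCechUnit : X → StoneCech X) →
      p ∈ closure ({p | ∀ f : C(X, ℝ),
        ∃ g : C(((insert p (Set.range (stoneCechUnit : X → StoneCech X))) : Set (StoneCech X)), ℝ),
          ∀ x : X, g ⟨stoneCechUnit x, Set.mem_insert_of_mem _ ⟨x, rfl⟩⟩ = f x}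
        \ Set.range (stoneCechUnit : X → StoneCech X)))
    (f : C(X, ℝ))
    (hhard : closure (stoneCechUnit '' closure {x | f x ≠ 0}) ∩
      (Set.range (stoneCechUnit : X → StoneCech X) ∪
        closure ({p | ∀ f : C(X, ℝ),
        ∃ g : C(((insert p (Set.range (stoneCechUnit : X → StoneCech X))) : Set (StoneCech X)), ℝ),
          ∀ x : X, g ⟨stoneCechUnit x, Set.mem_insert_of_mem _ ⟨x, rfl⟩⟩ = f x}
        \ Set.range (stoneCechUnit : X → StoneCech X)))
      ⊆ stoneCechUnit '' closure {x | f x ≠ 0}) :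
    ∃ B : ℝ, ∀ x : X, |f x| ≤ B := by
  by_contra hb
  push_neg at hb
  -- the function g = 1/(1+|f|) into Icc 0 1
  have hpos : ∀ x : X, (0:ℝ) < 1 + |f x| := fun x => by positivity
  have hmem : ∀ x : X, 1/(1 + |f x|) ∈ Icc (0:ℝ) 1 := by
    intro x
    constructor
    · positivity
    · rw [div_le_one (hpos x)]; simp [abs_nonneg]
  set g : X → Icc (0:ℝ) 1 := fun x => ⟨1/(1 + |f x|), hmem x⟩ with hg_def
  have hgc : Continuous g := by
    apply Continuous.subtype_mk
    exact continuous_const.div (by continuity) (fun x => (hpos x).ne')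
  set G := stoneCechExtend hgc with hG_def
  have hGu : ∀ x, G (stoneCechUnit x) = g x := congrFun (stoneCechExtend_extends hgc)
  obtain ⟨x0, -⟩ := hb 0
  have : Nonempty (StoneCech X) := ⟨stoneCechUnit x0⟩
  have hGcont : Continuous fun q => ((G q : ℝ)) :=
    continuous_subtype_val.comp (continuous_stoneCechExtend hgc)
  obtain ⟨p, -, hp⟩ := isCompact_univ.exists_isMinOn (univ_nonempty)
    (hGcont.continuousOn (s := univ))
  rcases lt_or_eq_of_le (G p).2.1 with hGp | hGp
  · -- min positive: f bounded, contradiction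
    obtain ⟨x, hx⟩ := hb (1/(G p : ℝ) - 1)
    have h1 : (G p : ℝ) ≤ (G (stoneCechUnit x) : ℝ) := hp (mem_univ _)
    rw [hGu x] at h1
    have h2 : (G p : ℝ) ≤ 1/(1 + |f x|) := h1
    have h3 : 1 + |f x| ≤ 1/(G p : ℝ) := by
      rw [le_div_iff₀ hGp]
      rw [le_div_iff₀ (hpos x)] at h2
      linarith
    linarith
  · -- min zero
    have hGp0 : (G p : ℝ) = 0 := hGp.symm
    have hpnr : p ∉ Set.range (stoneCechUnit : X → StoneCech X) := by
      rintro ⟨x, rfl⟩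
      rw [hGu x] at hGp0
      have : (0:ℝ) < 1/(1 + |f x|) := by positivity
      rw [hg_def] at hGp0
      simp at hGp0
      linarith [abs_nonneg (f x), hGp0]
    have hpK := hNP p hpnr
    have hpcl : p ∈ closure (stoneCechUnit '' closure {x | f x ≠ 0}) := by
      apply closure_mono (image_mono subset_closure)
      rw [mem_closure_iff]
      intro o ho hpo
      have ho' : IsOpen (o ∩ {q | (G q : ℝ) < 1}) :=
        ho.inter (isOpen_lt hGcont continuous_const)
      have hpo' : p ∈ o ∩ {q | (G q : ℝ) < 1} := ⟨hpo, by simp only [mem_setOf_eq]; rw [hGp0]; norm_num⟩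
      obtain ⟨x, hx⟩ := denseRange_stoneCechUnit.exists_mem_open ho' ⟨p, hpo'⟩
      refine ⟨stoneCechUnit x, hx.1, x, ?_, rfl⟩
      have h4 : (G (stoneCechUnit x) : ℝ) < 1 := hx.2
      rw [hGu x] at h4
      have h5 : 1/(1 + |f x|) < 1 := h4
      simp only [mem_setOf_eq]
      intro hfx
      rw [hfx] at h5
      norm_num at h5
    have := hhard ⟨hpcl, Or.inr hpK⟩
    obtain ⟨x, -, hxp⟩ := this
    exact hpnr ⟨x, hxp⟩

/-- A Tychonoff space `X` is nearly pseudocompact if and only if `C_H(X) ⊆ C*(X)`, i.e. every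
continuous real-valued function `f` on `X` for which `cl_X(X \ Z(f))` is hard in `X` is
bounded. -/
theorem nearlyPseudocompact_iff_CH_subset_Cstar
    (X : Type*) [TopologicalSpace X] [T35Space X] :
    NearlyPseudocompact X ↔
      ∀ f : C(X, ℝ), IsHard (closure {x | f x ≠ 0}) → ∃ B : ℝ, ∀ x : X, |f x| ≤ B := by
  constructor
  · intro hNP f hhard
    exact forward_dir hNP f hhard
  · intro hCH
    exact backward_dir (fun f h => hCH f h)
end
end

section
/- For a Tychonoff space X, υ_{C_H} X = X ∪ K, where υ_{C_H} X = {p ∈ βX : f*(p) ∈ ℝ for all f ∈ C_H(X)} and K = cl_{βX}(υX \ X). -/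
open Set Topology Filter

noncomputable section

/-- Composing `f : C(X, ℝ)` with a homeomorphism `φ` of `ℝ` onto `(0,1)` and extending the
resulting bounded function continuously to `βX`, with values in `[0,1]`. -/
def starExt {X : Type*} [TopologicalSpace X] (φ : ℝ ≃ₜ (Set.Ioo (0 : ℝ) 1)) (f : C(X, ℝ)) :
    StoneCech X → Set.Icc (0 : ℝ) 1 :=
  stoneCechExtend
    (Continuous.subtype_mk
      (continuous_subtype_val.comp (φ.continuous.comp f.continuous))
      (fun x => ⟨(φ (f x)).2.1.le, (φ (f x)).2.2.le⟩) :
      Continuous fun x : X =>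
        (⟨(φ (f x) : ℝ), ⟨(φ (f x)).2.1.le, (φ (f x)).2.2.le⟩⟩ : Set.Icc (0 : ℝ) 1))

/-- For `f ∈ C(X, ℝ)` and `p ∈ βX`, the statement `f*(p) ∈ ℝ`: composing `f` with a
homeomorphism of `ℝ` onto `(0,1)` and extending the resulting bounded function continuously
to `βX` (with values in `[0,1]`), the value of this extension at `p` lies in `(0,1)`. -/
def RealAt {X : Type*} [TopologicalSpace X] (f : C(X, ℝ)) (p : StoneCech X) : Prop :=
  ∀ φ : ℝ ≃ₜ (Set.Ioo (0 : ℝ) 1), (starExt φ f p : ℝ) ∈ Set.Ioo (0 : ℝ) 1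

/-- `C_H(X)`: the continuous real-valued functions `f` on `X` whose support
`cl_X(X \ Z(f))` is hard in `X`. -/
def CHSet (X : Type*) [TopologicalSpace X] : Set C(X, ℝ) :=
  {f | IsHard (closure {x | f x ≠ 0})}

/-- `υ_A X = {p ∈ βX : f*(p) ∈ ℝ for all f ∈ A}`. -/
def upsilonOf {X : Type*} [TopologicalSpace X] (A : Set C(X, ℝ)) : Set (StoneCech X) :=
  {p | ∀ f ∈ A, RealAt f p}

/-! ### Auxiliary material -/

/-- An order isomorphism between `Ioo (-1) 1` and `Ioo 0 1`. -/
def iooShift : (Set.Ioo (-1:ℝ) 1) ≃o (Set.Ioo (0:ℝ) 1) where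
  toFun x := ⟨((x:ℝ)+1)/2, ⟨by nlinarith [x.2.1], by nlinarith [x.2.2]⟩⟩
  invFun y := ⟨2*(y:ℝ)-1, ⟨by nlinarith [y.2.1], by nlinarith [y.2.2]⟩⟩
  left_inv x := by ext; ring
  right_inv y := by ext; ring
  map_rel_iff' := by
    rintro ⟨a, _⟩ ⟨b, _⟩
    simp only [Equiv.coe_fn_mk, Subtype.mk_le_mk]
    constructor <;> intro h <;> simp only [← Subtype.coe_le_coe, Subtype.coe_mk] at h ⊢ <;> linarith

/-- Some homeomorphism between `ℝ` and `Ioo 0 1`. -/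
def phi0 : ℝ ≃ₜ (Set.Ioo (0:ℝ) 1) :=
  (orderIsoIooNegOneOne ℝ).toHomeomorph.trans iooShift.toHomeomorph

section Aux

set_option linter.unusedSectionVars false

variable {X : Type*} [TopologicalSpace X] [T35Space X]

lemma starExt_unit (φ : ℝ ≃ₜ (Set.Ioo (0:ℝ) 1)) (f : C(X, ℝ)) (x : X) :
    starExt φ f (stoneCechUnit x)
      = ⟨(φ (f x) : ℝ), ⟨(φ (f x)).2.1.le, (φ (f x)).2.2.le⟩⟩ :=
  congrFun (stoneCechExtend_extends _) x

lemma starExt_unit' (φ : ℝ ≃ₜ (Set.Ioo (0:ℝ) 1)) (f : C(X, ℝ)) (x : X) :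
    (starExt φ f (stoneCechUnit x) : ℝ) = (φ (f x) : ℝ) :=
  congrArg Subtype.val (starExt_unit φ f x)

/-- If `H` is closed in `X` and `x ∉ H`, then `stoneCechUnit x` is not in the `βX`-closure
of the image of `H`. -/
lemma unit_not_mem_closure_image {H : Set X} (hH : IsClosed H) {x : X} (hx : x ∉ H) :
    stoneCechUnit x ∉ closure (stoneCechUnit '' H) := by
  obtain ⟨f, fc, fx0, fH1⟩ := CompletelyRegularSpace.completely_regular x H hH hx
  intro hmem
  have hcl : closure (stoneCechUnit '' H) ⊆ (stoneCechExtend fc) ⁻¹' {1} := by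
    apply closure_minimal
    · rintro _ ⟨y, hy, rfl⟩
      have : stoneCechExtend fc (stoneCechUnit y) = f y :=
        congrFun (stoneCechExtend_extends fc) y
      simp only [Set.mem_preimage, Set.mem_singleton_iff, this, fH1 hy, Pi.one_apply]
    · exact isClosed_singleton.preimage (continuous_stoneCechExtend fc)
  have h1 : stoneCechExtend fc (stoneCechUnit x) = 1 := hcl hmem
  have h0 : stoneCechExtend fc (stoneCechUnit x) = 0 := by
    have hx' : stoneCechExtend fc (stoneCechUnit x) = f x :=
      congrFun (stoneCechExtend_extends fc) x
    rw [hx', fx0]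
  rw [h0] at h1
  exact zero_ne_one h1

lemma neBot_comap_unit (p : StoneCech X) :
    (Filter.comap (stoneCechUnit : X → StoneCech X) (𝓝 p)).NeBot := by
  rw [Filter.comap_neBot_iff]
  intro t ht
  rcases mem_closure_iff_nhds.1 (denseRange_stoneCechUnit p) t ht with ⟨q, hqt, x, rfl⟩
  exact ⟨x, hqt⟩

lemma tendsto_starExt (φ : ℝ ≃ₜ (Set.Ioo (0:ℝ) 1)) (f : C(X, ℝ)) (p : StoneCech X) :
    Tendsto (fun x => (φ (f x) : ℝ)) (Filter.comap (stoneCechUnit : X → StoneCech X) (𝓝 p))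
      (𝓝 (starExt φ f p : ℝ)) := by
  have hc : Continuous (starExt φ f) := continuous_stoneCechExtend _
  have h2 : Tendsto (fun x : X => starExt φ f (stoneCechUnit x))
      (Filter.comap (stoneCechUnit : X → StoneCech X) (𝓝 p)) (𝓝 (starExt φ f p)) :=
    (hc.tendsto p).comp tendsto_comap
  have h3 := (continuous_subtype_val.tendsto _).comp h2
  exact h3.congr fun x => starExt_unit' φ f x

/-- If `f* (p)` is real (for all witnessing homeomorphisms), then `f` extends to `X ∪ {p}`. -/
lemma realAt_extension {f : C(X, ℝ)} {p : StoneCech X} (h : RealAt f p) :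
    ∃ g : C(((insert p (Set.range (stoneCechUnit : X → StoneCech X))) : Set (StoneCech X)), ℝ),
      ∀ x : X, g ⟨stoneCechUnit x, Set.mem_insert_of_mem _ ⟨x, rfl⟩⟩ = f x := by
  have hmem : ∀ q : ((insert p (Set.range (stoneCechUnit : X → StoneCech X))) :
      Set (StoneCech X)), (starExt phi0 f q.1 : ℝ) ∈ Set.Ioo (0:ℝ) 1 := by
    rintro ⟨q, hq⟩
    rcases hq with rfl | ⟨x, rfl⟩
    · exact h phi0
    · rw [starExt_unit']
      exact (phi0 (f x)).2
  refine ⟨⟨fun q => phi0.symm ⟨(starExt phi0 f q.1 : ℝ), hmem q⟩, ?_⟩, ?_⟩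
  · exact phi0.symm.continuous.comp
      ((continuous_subtype_val.comp
        ((continuous_stoneCechExtend _).comp continuous_subtype_val)).subtype_mk _)
  · intro x
    have hval : (⟨(starExt phi0 f (stoneCechUnit x) : ℝ),
        hmem ⟨stoneCechUnit x, Set.mem_insert_of_mem _ ⟨x, rfl⟩⟩⟩ : Set.Ioo (0:ℝ) 1)
        = phi0 (f x) := Subtype.ext (starExt_unit' phi0 f x)
    show phi0.symm _ = f x
    rw [hval, Homeomorph.symm_apply_apply]

end Aux

/-- For a Tychonoff space `X`, `υ_{C_H} X = X ∪ K`, where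
`υ_{C_H} X = {p ∈ βX : f*(p) ∈ ℝ for all f ∈ C_H(X)}` and `K = cl_{βX}(υX \ X)`. -/
theorem upsilon_CH_eq_union_K
    (X : Type*) [TopologicalSpace X] [T35Space X] :
    upsilonOf (CHSet X) = Set.range (stoneCechUnit : X → StoneCech X) ∪ KSet X := by
  ext p
  constructor
  · -- hard direction
    intro hp
    by_contra hnot
    simp only [Set.mem_union, not_or] at hnot
    obtain ⟨hnr, hnK⟩ := hnot
    -- p is not in the Hewitt realcompactification
    have hph : p ∉ hewittSet X := fun hmem => hnK (subset_closure ⟨hmem, hnr⟩)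
    obtain ⟨f0, hf0⟩ := not_forall.1 hph
    -- hence some f0 has f0*(p) not real
    have hnreal : ¬ RealAt f0 p := fun hreal => hf0 (realAt_extension hreal)
    obtain ⟨φ, hφ⟩ := not_forall.1 hnreal
    -- f0 is unbounded along the trace filter at p
    set F : Filter X := Filter.comap (stoneCechUnit : X → StoneCech X) (𝓝 p) with hF
    haveI : F.NeBot := neBot_comap_unit p
    have hub : ∀ C : ℝ, ∀ᶠ x in F, C ≤ |f0 x| := by
      intro C
      set S : Set ℝ := (fun t => (φ t : ℝ)) '' Set.Icc (-C) C with hS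
      have hcomp : IsCompact S :=
        isCompact_Icc.image (continuous_subtype_val.comp φ.continuous)
      have hLnot : (starExt φ f0 p : ℝ) ∉ S := by
        rintro ⟨t, _, ht⟩
        exact hφ (ht ▸ (φ t).2)
      have hopen : Sᶜ ∈ 𝓝 (starExt φ f0 p : ℝ) :=
        hcomp.isClosed.isOpen_compl.mem_nhds hLnot
      filter_upwards [(tendsto_starExt φ f0 p) hopen] with x hx
      by_contra hC
      exact hx ⟨f0 x, abs_le.1 (le_of_lt (not_le.1 hC)), rfl⟩
    -- separate p from K
    have hKc : (KSet X)ᶜ ∈ 𝓝 p := (isClosed_closure.isOpen_compl).mem_nhds hnK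
    obtain ⟨t, htn, htc, hts⟩ := exists_mem_nhds_isClosed_subset hKc
    have hpW : p ∈ interior t := mem_interior_iff_mem_nhds.2 htn
    obtain ⟨h, h0, h1, hbd⟩ := exists_continuous_zero_one_of_isClosed
      ((isOpen_interior (s := t)).isClosed_compl) (isClosed_singleton (x := p))
      (by simp [Set.disjoint_singleton_right, hpW])
    -- the function f
    set f : C(X, ℝ) := ⟨fun x => h (stoneCechUnit x) * f0 x,
      (h.continuous.comp continuous_stoneCechUnit).mul f0.continuous⟩ with hf
    -- f has hard support
    have hfCH : f ∈ CHSet X := by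
      have hsub : closure (stoneCechUnit '' closure {x | f x ≠ 0}) ⊆ t := by
        have h1' : stoneCechUnit '' closure {x | f x ≠ 0}
            ⊆ closure (stoneCechUnit '' {x | f x ≠ 0}) :=
          image_closure_subset_closure_image continuous_stoneCechUnit
        have h2' : stoneCechUnit '' {x | f x ≠ 0} ⊆ t := by
          rintro _ ⟨x, hx, rfl⟩
          have hhx : h (stoneCechUnit x) ≠ 0 := fun hz => hx (by simp [hf, hz])
          have : stoneCechUnit x ∈ interior t := by
            by_contra hc
            exact hhx (h0 hc)
          exact interior_subset this
        calc closure (stoneCechUnit '' closure {x | f x ≠ 0})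
            ⊆ closure (closure (stoneCechUnit '' {x | f x ≠ 0})) := closure_mono h1'
          _ = closure (stoneCechUnit '' {x | f x ≠ 0}) := closure_closure
          _ ⊆ t := closure_minimal h2' htc
      intro q hq
      obtain ⟨hq1, hq2⟩ := hq
      have hqK : q ∉ KSet X := fun hk => (hts (hsub hq1)) hk
      rcases hq2 with ⟨x, rfl⟩ | hk
      · by_contra hxH
        have hxH' : x ∉ closure {x | f x ≠ 0} := fun hmem => hxH ⟨x, hmem, rfl⟩
        exact unit_not_mem_closure_image isClosed_closure hxH' hq1
      · exact absurd hk hqK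
    -- but f*(p) is real by assumption: contradiction
    have hIoo : (starExt φ f p : ℝ) ∈ Set.Ioo (0:ℝ) 1 := hp f hfCH φ
    set L : Set.Ioo (0:ℝ) 1 := ⟨(starExt φ f p : ℝ), hIoo⟩ with hL
    have htf : Tendsto (fun x => (φ (f x) : ℝ)) F (𝓝 (starExt φ f p : ℝ)) :=
      tendsto_starExt φ f p
    have htf1 : Tendsto (fun x => φ (f x)) F (𝓝 L) := tendsto_subtype_rng.2 htf
    have htf2 : Tendsto (fun x => f x) F (𝓝 (φ.symm L)) := by
      have := (φ.symm.continuous.tendsto L).comp htf1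
      exact this.congr fun x => φ.symm_apply_apply (f x)
    set c : ℝ := φ.symm L with hc
    have hev1 : ∀ᶠ x in F, |f x - c| < 1 :=
      htf2.eventually (eventually_abs_sub_lt c one_pos)
    have hev2 : ∀ᶠ x in F, (1:ℝ)/2 < h (stoneCechUnit x) := by
      have : Tendsto (fun x : X => h (stoneCechUnit x)) F (𝓝 1) := by
        have := (h.continuous.tendsto p).comp (tendsto_comap (f := stoneCechUnit))
        rwa [show h p = 1 from h1 rfl] at this
      exact this.eventually (eventually_gt_nhds (by norm_num))
    have hev3 : ∀ᶠ x in F, 2 * (|c| + 2) ≤ |f0 x| := hub (2 * (|c| + 2))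
    obtain ⟨x, hx1, hx2, hx3⟩ := (hev1.and (hev2.and hev3)).exists
    have hfx : f x = h (stoneCechUnit x) * f0 x := rfl
    have habs : |f x| = h (stoneCechUnit x) * |f0 x| := by
      rw [hfx, abs_mul, abs_of_pos (lt_trans (by norm_num) hx2)]
    have hge : |c| + 2 ≤ |f x| := by
      rw [habs]
      nlinarith [abs_nonneg (f0 x)]
    have hlt : |f x| < |c| + 1 := by
      have := abs_sub_abs_le_abs_sub (f x) c
      linarith
    linarith
  · -- easy direction
    intro hq f hf φ
    by_cases hr : p ∈ Set.range (stoneCechUnit : X → StoneCech X)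
    · obtain ⟨x, rfl⟩ := hr
      rw [starExt_unit']
      exact (φ (f x)).2
    · have hpK : p ∈ KSet X := hq.resolve_left hr
      set H : Set X := closure {x | f x ≠ 0} with hH
      have hpcl : p ∉ closure (stoneCechUnit '' H) := by
        intro hmem
        have : p ∈ stoneCechUnit '' H := hf ⟨hmem, Or.inr hpK⟩
        exact hr ⟨this.choose, this.choose_spec.2⟩
      set c0 : Set.Icc (0:ℝ) 1 :=
        ⟨(φ 0 : ℝ), ⟨(φ 0).2.1.le, (φ 0).2.2.le⟩⟩ with hc0
      set G : Filter (StoneCech X) :=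
        𝓝 p ⊓ Filter.principal (Set.range (stoneCechUnit : X → StoneCech X)) with hG
      haveI hGne : G.NeBot := mem_closure_iff_clusterPt.1 (denseRange_stoneCechUnit p)
      have hEv : ∀ᶠ q in G, starExt φ f q = c0 := by
        have hU : (closure (stoneCechUnit '' H))ᶜ ∈ G :=
          mem_inf_of_left ((isClosed_closure.isOpen_compl).mem_nhds hpcl)
        have hR : Set.range (stoneCechUnit : X → StoneCech X) ∈ G :=
          mem_inf_of_right (mem_principal_self _)
        filter_upwards [hU, hR] with q hqU hqR
        obtain ⟨x, rfl⟩ := hqR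
        have hxH : x ∉ H := fun hxH => hqU (subset_closure ⟨x, hxH, rfl⟩)
        have hfx : f x = 0 := by
          by_contra hne
          exact hxH (subset_closure hne)
        rw [starExt_unit φ f x]
        exact Subtype.ext (by rw [hfx])
      have ht1 : Tendsto (starExt φ f) G (𝓝 (starExt φ f p)) :=
        ((continuous_stoneCechExtend _).tendsto p).mono_left inf_le_left
      have ht2 : Tendsto (starExt φ f) G (𝓝 c0) :=
        tendsto_const_nhds.congr' (hEv.mono fun q h => h.symm)
      have heq : starExt φ f p = c0 := tendsto_nhds_unique ht1 ht2
      have : (starExt φ f p : ℝ) = (φ 0 : ℝ) := congrArg Subtype.val heq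
      rw [this]
      exact (φ 0).2
end
end
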